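/- arXiv:2009.03599 — 3 statements merged into one kernel-verified Lean document; each statement's English description precedes it below -/
import Mathlib

section
/- Let N ≥ 2 and let g : ℝ^N \ {0} → (0,∞) be a radial, decreasing, admissible function. Then there exists a constant C = C(N,g) such that for every 1/2 ≤ r, r' ≤ 3/2 one has |ψ(r,r) − ψ(r',r')| ≤ C |r − r'|. -/
open MeasureTheory Metric Set
open scoped ENNReal NNReal BigOperators Pointwise

noncomputable section

/-- Euclidean space `ℝ^N`. -/
abbrev Euc (N : ℕ) := EuclideanSpace ℝ (Fin N)

/-- The Riesz-type interaction energy `𝔯(F,G) = ∬_{F×G} g(z−w) dz dw`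
for the radial kernel `g(v) = gb ‖v‖`. -/
def riesz2 {N : ℕ} (gb : ℝ → ℝ) (F G : Set (Euc N)) : ℝ :=
  ∫ z in F, ∫ w in G, gb ‖z - w‖

/-- The Riesz-type energy `𝔯(E) = 𝔯(E,E)`. -/
def riesz {N : ℕ} (gb : ℝ → ℝ) (E : Set (Euc N)) : ℝ := riesz2 gb E E

/-- The perimeter of a set (De Giorgi's variational definition: the total variation of the
distributional gradient of the characteristic function), with values in `ℝ≥0∞`. -/
def perimeter {N : ℕ} (E : Set (Euc N)) : ℝ≥0∞ :=
  ⨆ φ : {φ : Euc N → Euc N // ContDiff ℝ 1 φ ∧ HasCompactSupport φ ∧ ∀ x, ‖φ x‖ ≤ 1},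
    ENNReal.ofReal (∫ x in E, ∑ i : Fin N, fderiv ℝ φ.1 x (EuclideanSpace.single i 1) i)

/-- The Gamow-type functional `𝔉_ε(E) = P(E) + ε 𝔯(E)`. -/
def gamow {N : ℕ} (gb : ℝ → ℝ) (ε : ℝ) (E : Set (Euc N)) : ℝ≥0∞ :=
  perimeter E + ENNReal.ofReal (ε * riesz gb E)

/-- The set `E(u)` associated to a function `u` on the unit sphere. -/
def Eset {N : ℕ} (u : Euc N → ℝ) : Set (Euc N) :=
  {z | ∃ x : Euc N, ‖x‖ = 1 ∧ ∃ ρ : ℝ, 0 ≤ ρ ∧ ρ < 1 + u x ∧ z = ρ • x}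

/-- The first vector of the standard basis of `ℝ^N` (junk value `0` if `N = 0`). -/
def e1 (N : ℕ) : Euc N :=
  if h : 0 < N then EuclideanSpace.single (⟨0, h⟩ : Fin N) (1 : ℝ) else 0

/-- `ψ(a,b) = ∫_{B(0,a)} g(y−x) dy` for (any) `x` with `|x| = b`. -/
def psi (N : ℕ) (gb : ℝ → ℝ) (a b : ℝ) : ℝ :=
  ∫ y in ball (0 : Euc N) a, gb ‖y - b • e1 N‖

/-- `J(σ) = ψ(1+σ,1) − ψ(1,1)`. -/
def Jfun (N : ℕ) (gb : ℝ → ℝ) (σ : ℝ) : ℝ := psi N gb (1 + σ) 1 - psi N gb 1 1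

/-- The squared `W^{1,2}(𝕊^{N−1})` norm of (the 0-homogeneous extension of) `u`:
`‖u‖²_{L²(𝕊^{N−1})} + ‖∇_τ u‖²_{L²(𝕊^{N−1})}`, the integrals being with respect to the
`(N−1)`-dimensional Hausdorff measure.  For a function that is `0`-homogeneous, the tangential
gradient on the sphere coincides with the full gradient. -/
def w12normSq {N : ℕ} (u : Euc N → ℝ) : ℝ :=
  (∫ x in sphere (0 : Euc N) 1, (u x) ^ 2 ∂μH[(N : ℝ) - 1]) +
  (∫ x in sphere (0 : Euc N) 1, ‖fderiv ℝ u x‖ ^ 2 ∂μH[(N : ℝ) - 1])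

theorem lintegral_fun_norm_addHaar' {E : Type*} [NormedAddCommGroup E] [NormedSpace ℝ E]
    [MeasurableSpace E] [BorelSpace E] [Nontrivial E] [FiniteDimensional ℝ E]
    (μ : Measure E) [μ.IsAddHaarMeasure] (f : ℝ → ℝ≥0∞) (hf : Measurable f) :
    ∫⁻ x, f ‖x‖ ∂μ
      = ((Module.finrank ℝ E) : ℝ≥0∞) * μ (ball 0 1) * ∫⁻ y in Ioi (0 : ℝ), ENNReal.ofReal (y ^ ((Module.finrank ℝ E) - 1)) * f y := by
  calc
    ∫⁻ x, f ‖x‖ ∂μ = ∫⁻ x : ({(0)}ᶜ : Set E), f ‖x.1‖ ∂(μ.comap (↑)) := by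
      rw [lintegral_subtype_comap (measurableSet_singleton _).compl fun x ↦ f ‖x‖,
        MeasureTheory.restrict_compl_singleton]
    _ = ∫⁻ x : sphere (0 : E) 1 × Ioi (0 : ℝ), f x.2
          ∂μ.toSphere.prod (.volumeIoiPow ((Module.finrank ℝ E) - 1)) := by
      rw [← μ.measurePreserving_homeomorphUnitSphereProd.lintegral_comp_emb
        (Homeomorph.measurableEmbedding _) (fun p => f p.2)]
      simp [homeomorphUnitSphereProd]
    _ = μ.toSphere univ * ∫⁻ y : Ioi (0:ℝ), f y ∂(Measure.volumeIoiPow ((Module.finrank ℝ E) - 1)) := by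
      have hm : AEMeasurable (fun p : ↑(sphere (0:E) 1) × ↑(Ioi (0:ℝ)) => f ↑p.2)
          (μ.toSphere.prod (.volumeIoiPow ((Module.finrank ℝ E) - 1))) := by fun_prop
      rw [MeasureTheory.lintegral_prod _ hm]
      simp [lintegral_const, mul_comm]
    _ = ((Module.finrank ℝ E) : ℝ≥0∞) * μ (ball 0 1) * ∫⁻ y in Ioi (0 : ℝ), ENNReal.ofReal (y ^ ((Module.finrank ℝ E) - 1)) * f y := by
      rw [Measure.toSphere_apply_univ, Measure.volumeIoiPow,
        lintegral_withDensity_eq_lintegral_mul _ (f := fun r : Ioi (0:ℝ) => ENNReal.ofReal (r.1 ^ ((Module.finrank ℝ E) - 1))) (by fun_prop)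
          (g := fun y : Ioi (0:ℝ) => f ↑y) (by fun_prop)]
      simp only [Pi.mul_apply]
      rw [lintegral_subtype_comap measurableSet_Ioi (fun y : ℝ => ENNReal.ofReal (y ^ ((Module.finrank ℝ E) - 1)) * f y)]

/-- measurable modification of an antitone-on-`Ioi 0` function -/
theorem measurable_mod (gb : ℝ → ℝ) (hdec : AntitoneOn gb (Set.Ioi (0:ℝ))) :
    Measurable (fun t => if 0 < t then gb t else 0) := by
  apply measurable_of_Ioi
  intro c
  have hS : MeasurableSet {t : ℝ | 0 < t ∧ c < gb t} := by
    apply Set.OrdConnected.measurableSet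
    constructor
    rintro a ⟨ha0, hac⟩ b ⟨hb0, hbc⟩ x hx
    have hx0 : 0 < x := lt_of_lt_of_le ha0 hx.1
    exact ⟨hx0, lt_of_lt_of_le hbc (hdec (mem_Ioi.mpr hx0) (mem_Ioi.mpr hb0) hx.2)⟩
  by_cases hc : c < 0
  · have h : (fun t => if 0 < t then gb t else 0) ⁻¹' Ioi c
        = {t : ℝ | 0 < t ∧ c < gb t} ∪ Iic 0 := by
      ext t
      simp only [mem_preimage, mem_Ioi, mem_union, mem_setOf_eq, mem_Iic]
      by_cases ht : 0 < t
      · simp only [if_pos ht]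
        constructor
        · intro h; exact Or.inl ⟨ht, h⟩
        · rintro (⟨_, h⟩ | h)
          · exact h
          · linarith
      · simp only [if_neg ht]
        constructor
        · intro _; exact Or.inr (le_of_not_gt ht)
        · intro _; exact hc
    rw [h]; exact hS.union measurableSet_Iic
  · have h : (fun t => if 0 < t then gb t else 0) ⁻¹' Ioi c = {t : ℝ | 0 < t ∧ c < gb t} := by
      ext t
      simp only [mem_preimage, mem_Ioi, mem_setOf_eq]
      by_cases ht : 0 < t
      · simp only [if_pos ht]
        exact ⟨fun h => ⟨ht, h⟩, fun h => h.2⟩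
      · simp only [if_neg ht]
        constructor
        · intro h; exact absurd h (not_lt.mpr (not_lt.mp hc))
        · intro h; exact absurd h.1 ht
    rw [h]; exact hS



set_option maxHeartbeats 2000000 in
/-- There is a constant `C = C(N,g)` such that for every `1/2 ≤ r, r' ≤ 3/2` one has
`|ψ(r,r) − ψ(r',r')| ≤ C |r − r'|`. -/
theorem psi_diag_lipschitz {N : ℕ} (hN : 2 ≤ N) (gb : ℝ → ℝ)
    (hpos : ∀ t : ℝ, 0 < t → 0 < gb t)
    (hdec : AntitoneOn gb (Set.Ioi (0 : ℝ)))
    (hadm : IntegrableOn (fun t : ℝ => gb t * t ^ (N - 1)) (Set.Ioo (0 : ℝ) 1)) :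
    ∃ C : ℝ, ∀ r r' : ℝ, 1 / 2 ≤ r → r ≤ 3 / 2 → 1 / 2 ≤ r' → r' ≤ 3 / 2 →
      |psi N gb r r - psi N gb r' r'| ≤ C * |r - r'| := by
  classical
  -- basic instances and facts
  have hdimE : Module.finrank ℝ (Euc N) = N := finrank_euclideanSpace_fin
  haveI : Nontrivial (Euc N) :=
    Module.nontrivial_of_finrank_pos (R := ℝ) (by rw [hdimE]; omega)
  have he1 : ‖e1 N‖ = 1 := by
    rw [e1, dif_pos (by omega : 0 < N)]
    simp [EuclideanSpace.norm_single]
  -- measurable modification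
  set gb0 : ℝ → ℝ := fun t => if 0 < t then gb t else 0 with hgb0_def
  have hgb0meas : Measurable gb0 := measurable_mod gb hdec
  have hgb0nn : ∀ t, 0 ≤ gb0 t := by
    intro t; by_cases ht : 0 < t <;> simp [hgb0_def, ht]
    exact (hpos t ht).le
  have hgb0mono : ∀ x y : ℝ, 0 < x → x ≤ y → gb0 y ≤ gb0 x := by
    intro x y hx hxy
    have hy : 0 < y := lt_of_lt_of_le hx hxy
    simp only [hgb0_def, if_pos hx, if_pos hy]
    exact hdec (mem_Ioi.mpr hx) (mem_Ioi.mpr hy) hxy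
  set q : ℝ → ℝ≥0∞ := fun t => ENNReal.ofReal (gb0 t) with hq_def
  have hqmeas : Measurable q := ENNReal.measurable_ofReal.comp hgb0meas
  have hqmono : ∀ (ρ ρ' x : ℝ), 0 < ρ → ρ ≤ ρ' → 0 ≤ x → q (ρ' * x) ≤ q (ρ * x) := by
    intro ρ ρ' x hρ hρρ hx
    rcases eq_or_lt_of_le hx with h | h
    · rw [← h, mul_zero, mul_zero]
    · exact ENNReal.ofReal_le_ofReal (hgb0mono _ _ (by positivity) (by nlinarith))
  -- main objects
  set K : ℝ → ℝ≥0∞ := fun s => ∫⁻ u in Ioo (0:ℝ) s, ENNReal.ofReal (u ^ (N-1)) * q u with hK_def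
  set c : ℝ≥0∞ := (N : ℝ≥0∞) * volume (ball (0 : Euc N) 1) with hc_def
  set Λ : ℝ → ℝ≥0∞ := fun r => ∫⁻ w in ball (-(e1 N)) (1:ℝ), q (r * ‖w‖) with hΛ_def
  set Θ : ℝ → ℝ≥0∞ := fun r => ∫⁻ w in ball (0 : Euc N) 2, q (r * ‖w‖) with hΘ_def
  have hsub : ball (-(e1 N)) (1:ℝ) ⊆ ball (0 : Euc N) 2 := by
    intro x hx
    rw [mem_ball_iff_norm] at hx
    rw [mem_ball_zero_iff]
    have : ‖x‖ ≤ ‖x - -e1 N‖ + ‖e1 N‖ := by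
      calc ‖x‖ = ‖x - -e1 N + -e1 N‖ := by rw [sub_add_cancel]
        _ ≤ ‖x - -e1 N‖ + ‖-e1 N‖ := norm_add_le _ _
        _ = ‖x - -e1 N‖ + ‖e1 N‖ := by rw [norm_neg]
    rw [he1] at this; linarith
  -- K facts
  have hKmono : ∀ x y : ℝ, x ≤ y → K x ≤ K y := by
    intro x y hxy
    exact lintegral_mono_set (Ioo_subset_Ioo_right hxy)
  have hK3 : K 3 ≠ ∞ := by
    have hsplitI : Ioo (0:ℝ) 3 = Ioo 0 1 ∪ Ico 1 3 :=
      (Ioo_union_Ico_eq_Ioo (by norm_num) (by norm_num)).symm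
    have hle : K 3 ≤ (∫⁻ u in Ioo (0:ℝ) 1, ENNReal.ofReal (u ^ (N-1)) * q u)
        + ∫⁻ u in Ico (1:ℝ) 3, ENNReal.ofReal (u ^ (N-1)) * q u := by
      rw [hK_def]; simp only; rw [hsplitI]; exact lintegral_union_le _ _ _
    refine ne_top_of_le_ne_top (ENNReal.add_ne_top.mpr ⟨?_, ?_⟩) hle
    · have hcong : (∫⁻ u in Ioo (0:ℝ) 1, ENNReal.ofReal (u ^ (N-1)) * q u)
          = ∫⁻ u in Ioo (0:ℝ) 1, ENNReal.ofReal (gb u * u ^ (N-1)) := by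
        refine setLIntegral_congr_fun measurableSet_Ioo ?_
        intro u hu
        rw [hq_def]; simp only
        rw [hgb0_def]; simp only [if_pos hu.1]
        rw [← ENNReal.ofReal_mul (pow_nonneg hu.1.le _), mul_comm]
      rw [hcong]
      have hnn : 0 ≤ᵐ[volume.restrict (Ioo (0:ℝ) 1)] fun u => gb u * u ^ (N-1) := by
        filter_upwards [ae_restrict_mem measurableSet_Ioo] with u hu
        exact mul_nonneg (hpos u hu.1).le (pow_nonneg hu.1.le _)
      exact ((hasFiniteIntegral_iff_ofReal hnn).1 hadm.2).ne
    · have hb : (∫⁻ u in Ico (1:ℝ) 3, ENNReal.ofReal (u ^ (N-1)) * q u)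
          ≤ ∫⁻ _u in Ico (1:ℝ) 3, ENNReal.ofReal (3 ^ (N-1)) * ENNReal.ofReal (gb 1) := by
        refine setLIntegral_mono measurable_const ?_
        intro u hu
        refine mul_le_mul' (ENNReal.ofReal_le_ofReal ?_) ?_
        · exact pow_le_pow_left₀ (by linarith [hu.1]) (by linarith [hu.2]) _
        · rw [hq_def]; simp only
          refine ENNReal.ofReal_le_ofReal ?_
          rw [hgb0_def]; simp only [if_pos (by linarith [hu.1] : (0:ℝ) < u)]
          exact hdec (mem_Ioi.mpr one_pos) (mem_Ioi.mpr (by linarith [hu.1])) hu.1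
      refine ne_top_of_le_ne_top ?_ hb
      rw [setLIntegral_const]
      exact ENNReal.mul_ne_top
        (ENNReal.mul_ne_top ENNReal.ofReal_ne_top ENNReal.ofReal_ne_top)
        (by simp [Real.volume_Ico])
  -- Θ formula
  have hΘeq : ∀ ρ : ℝ, 0 < ρ → Θ ρ = c * ((ENNReal.ofReal ρ) ^ N)⁻¹ * K (2*ρ) := by
    intro ρ hρ
    set f : ℝ → ℝ≥0∞ := (Iio (2:ℝ)).indicator (fun t => q (ρ * t)) with hf_def
    have hfm : Measurable f := (hqmeas.comp (measurable_const_mul ρ)).indicator measurableSet_Iio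
    have hpt : ∀ x : Euc N, f ‖x‖ = (ball (0 : Euc N) 2).indicator (fun x => q (ρ * ‖x‖)) x := by
      intro x
      by_cases hx : x ∈ ball (0 : Euc N) 2
      · have hx' : ‖x‖ ∈ Iio (2:ℝ) := by rwa [mem_Iio, ← mem_ball_zero_iff]
        rw [indicator_of_mem hx, hf_def, indicator_of_mem hx']
      · have hx' : ‖x‖ ∉ Iio (2:ℝ) := by rwa [mem_Iio, ← mem_ball_zero_iff]
        rw [indicator_of_notMem hx, hf_def, indicator_of_notMem hx']
    have hpolar := lintegral_fun_norm_addHaar' (volume : Measure (Euc N)) f hfm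
    rw [hdimE] at hpolar
    have hΘf : Θ ρ = ∫⁻ x : Euc N, f ‖x‖ := by
      rw [hΘ_def]; simp only
      rw [← lintegral_indicator measurableSet_ball]
      exact (lintegral_congr hpt).symm
    have hIoo : (∫⁻ y in Ioi (0:ℝ), ENNReal.ofReal (y ^ (N-1)) * f y)
        = ∫⁻ t in Ioo (0:ℝ) 2, ENNReal.ofReal (t ^ (N-1)) * q (ρ * t) := by
      have hpt2 : ∀ y : ℝ, ENNReal.ofReal (y ^ (N-1)) * f y
          = (Iio (2:ℝ)).indicator (fun t => ENNReal.ofReal (t ^ (N-1)) * q (ρ * t)) y := by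
        intro y
        by_cases hy : y ∈ Iio (2:ℝ)
        · rw [hf_def, indicator_of_mem hy, indicator_of_mem hy]
        · rw [hf_def, indicator_of_notMem hy, indicator_of_notMem hy, mul_zero]
      rw [lintegral_congr hpt2, lintegral_indicator measurableSet_Iio,
        Measure.restrict_restrict measurableSet_Iio, inter_comm, Ioi_inter_Iio]
    have hc0 : ((ENNReal.ofReal ρ) ^ (N-1)) ≠ 0 :=
      pow_ne_zero _ (ENNReal.ofReal_pos.mpr hρ).ne'
    have hctop : ((ENNReal.ofReal ρ) ^ (N-1)) ≠ ∞ := ENNReal.pow_ne_top ENNReal.ofReal_ne_top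
    have h1D : (∫⁻ t in Ioo (0:ℝ) 2, ENNReal.ofReal (t ^ (N-1)) * q (ρ * t))
        = ((ENNReal.ofReal ρ) ^ N)⁻¹ * K (2*ρ) := by
      set φ : ℝ → ℝ≥0∞ := (Ioo (0:ℝ) (2*ρ)).indicator
        (fun u => ENNReal.ofReal (u ^ (N-1)) * q u) with hφ_def
      have hφm : Measurable φ :=
        (((measurable_id.pow_const (N-1)).ennreal_ofReal).mul hqmeas).indicator measurableSet_Ioo
      have key : ∀ t : ℝ, (Ioo (0:ℝ) 2).indicator
            (fun t => ENNReal.ofReal (t ^ (N-1)) * q (ρ*t)) t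
          = ((ENNReal.ofReal ρ) ^ (N-1))⁻¹ * φ (ρ * t) := by
        intro t
        by_cases ht : t ∈ Ioo (0:ℝ) 2
        · have h2 : ρ * t ∈ Ioo (0:ℝ) (2*ρ) := ⟨mul_pos hρ ht.1, by nlinarith [ht.2]⟩
          rw [indicator_of_mem ht, hφ_def, indicator_of_mem h2]
          rw [show ENNReal.ofReal ((ρ*t) ^ (N-1))
                = (ENNReal.ofReal ρ) ^ (N-1) * ENNReal.ofReal (t ^ (N-1)) by
            rw [mul_pow, ENNReal.ofReal_mul (pow_nonneg hρ.le _), ENNReal.ofReal_pow hρ.le]]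
          rw [mul_assoc, ← mul_assoc (((ENNReal.ofReal ρ) ^ (N-1))⁻¹),
            ENNReal.inv_mul_cancel hc0 hctop, one_mul]
        · have h2 : ρ * t ∉ Ioo (0:ℝ) (2*ρ) := by
            simp only [mem_Ioo, not_and_or, not_lt] at ht ⊢
            rcases ht with h | h
            · left; exact mul_nonpos_of_nonneg_of_nonpos hρ.le h
            · right; nlinarith
          rw [indicator_of_notMem ht, hφ_def, indicator_of_notMem h2, mul_zero]
      calc (∫⁻ t in Ioo (0:ℝ) 2, ENNReal.ofReal (t ^ (N-1)) * q (ρ * t))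
          = ∫⁻ t, (Ioo (0:ℝ) 2).indicator
              (fun t => ENNReal.ofReal (t ^ (N-1)) * q (ρ*t)) t :=
            (lintegral_indicator measurableSet_Ioo _).symm
        _ = ∫⁻ t, ((ENNReal.ofReal ρ) ^ (N-1))⁻¹ * φ (ρ * t) := lintegral_congr key
        _ = ((ENNReal.ofReal ρ) ^ (N-1))⁻¹ * ∫⁻ t, φ (ρ * t) :=
            lintegral_const_mul' _ _ (ENNReal.inv_ne_top.mpr hc0)
        _ = ((ENNReal.ofReal ρ) ^ (N-1))⁻¹ * (ENNReal.ofReal ρ⁻¹ * ∫⁻ u, φ u) := by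
            congr 1
            rw [← lintegral_map hφm (measurable_const_mul ρ),
              Real.map_volume_mul_left hρ.ne', lintegral_smul_measure,
              abs_of_pos (inv_pos.mpr hρ), smul_eq_mul]
        _ = ((ENNReal.ofReal ρ) ^ N)⁻¹ * K (2*ρ) := by
            rw [show (∫⁻ u, φ u) = K (2*ρ) from by
              rw [hφ_def, lintegral_indicator measurableSet_Ioo, hK_def]]
            rw [ENNReal.ofReal_inv_of_pos hρ, ← mul_assoc,
              ← ENNReal.mul_inv (Or.inl hc0) (Or.inl hctop)]
            congr 2
            rw [← pow_succ]
            congr 1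
            omega
    rw [hΘf, hpolar, hIoo, h1D, hc_def]
    ring
  -- ψ representation
  haveI hNA : NullSingletonClass (volume : Measure (Euc N)) := by infer_instance
  have hpsi : ∀ r : ℝ, 0 < r → psi N gb r r = r^N * (Λ r).toReal := by
    intro r hr
    have hstep1 : psi N gb r r = ∫ y in ball (0 : Euc N) r, gb0 ‖y - r • e1 N‖ := by
      refine setIntegral_congr_ae measurableSet_ball ?_
      have hae : ∀ᵐ y ∂(volume : Measure (Euc N)), y ≠ r • e1 N := by
        filter_upwards [(Set.countable_singleton (r • e1 N)).ae_notMem volume] with y hy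
        simpa using hy
      filter_upwards [hae] with y hy _
      have hpos' : 0 < ‖y - r • e1 N‖ := norm_pos_iff.mpr (sub_ne_zero.mpr hy)
      rw [hgb0_def]; simp only [if_pos hpos']
    have hstep2 : (∫ y in ball (0 : Euc N) r, gb0 ‖y - r • e1 N‖)
        = (∫⁻ y in ball (0 : Euc N) r, q ‖y - r • e1 N‖).toReal := by
      have hm : AEStronglyMeasurable (fun y : Euc N => gb0 ‖y - r • e1 N‖)
          (volume.restrict (ball (0 : Euc N) r)) := by
        apply Measurable.aestronglyMeasurable
        exact hgb0meas.comp (by fun_prop)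
      rw [integral_eq_lintegral_of_nonneg_ae (ae_of_all _ fun y => hgb0nn _) hm]
    have hstep3 : (∫⁻ y in ball (0 : Euc N) r, q ‖y - r • e1 N‖)
        = ENNReal.ofReal (r^N) * ∫⁻ z in ball (0 : Euc N) 1, q (r * ‖z - e1 N‖) := by
      set F : Euc N → ℝ≥0∞ := (ball (0 : Euc N) r).indicator (fun y => q ‖y - r • e1 N‖)
        with hF_def
      have hFm : Measurable F :=
        (hqmeas.comp ((measurable_id.sub_const _).norm)).indicator measurableSet_ball
      have hFc : ∀ x : Euc N, F (r • x)
          = (ball (0 : Euc N) 1).indicator (fun z => q (r * ‖z - e1 N‖)) x := by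
        intro x
        by_cases hx : x ∈ ball (0 : Euc N) 1
        · have hx' : r • x ∈ ball (0 : Euc N) r := by
            rw [mem_ball_zero_iff] at hx ⊢
            rw [norm_smul, Real.norm_eq_abs, abs_of_pos hr]
            nlinarith
          rw [hF_def, indicator_of_mem hx', indicator_of_mem hx]
          congr 1
          rw [show r • x - r • e1 N = r • (x - e1 N) from (smul_sub r x (e1 N)).symm,
            norm_smul, Real.norm_eq_abs, abs_of_pos hr]
        · have hx' : r • x ∉ ball (0 : Euc N) r := by
            rw [mem_ball_zero_iff] at hx ⊢
            rw [norm_smul, Real.norm_eq_abs, abs_of_pos hr]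
            intro hcon; apply hx
            nlinarith
          rw [hF_def, indicator_of_notMem hx', indicator_of_notMem hx]
      have hmap : (∫⁻ x : Euc N, F (r • x))
          = ENNReal.ofReal ((r^N)⁻¹) * ∫⁻ y : Euc N, F y := by
        rw [← lintegral_map hFm (measurable_const_smul r),
          Measure.map_addHaar_smul volume hr.ne', hdimE, lintegral_smul_measure,
          abs_of_pos (inv_pos.mpr (pow_pos hr N)), smul_eq_mul]
      have hL : (∫⁻ x : Euc N, F (r • x))
          = ∫⁻ z in ball (0 : Euc N) 1, q (r * ‖z - e1 N‖) := by
        rw [lintegral_congr hFc, lintegral_indicator measurableSet_ball]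
      have hR : (∫⁻ y : Euc N, F y) = ∫⁻ y in ball (0 : Euc N) r, q ‖y - r • e1 N‖ := by
        rw [hF_def, lintegral_indicator measurableSet_ball]
      rw [hL, hR] at hmap
      rw [hmap, ENNReal.ofReal_inv_of_pos (pow_pos hr N), ← mul_assoc,
        ENNReal.mul_inv_cancel (ENNReal.ofReal_pos.mpr (pow_pos hr N)).ne'
          ENNReal.ofReal_ne_top, one_mul]
    have hstep4 : (∫⁻ z in ball (0 : Euc N) 1, q (r * ‖z - e1 N‖)) = Λ r := by
      set P : Euc N → ℝ≥0∞ := (ball (-(e1 N)) (1:ℝ)).indicator (fun w => q (r * ‖w‖))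
        with hP_def
      have htr := lintegral_add_right_eq_self (μ := (volume : Measure (Euc N))) P (-(e1 N))
      have hPc : ∀ z : Euc N, P (z + -(e1 N))
          = (ball (0 : Euc N) 1).indicator (fun z => q (r * ‖z - e1 N‖)) z := by
        intro z
        by_cases hz : z ∈ ball (0 : Euc N) 1
        · have hz' : z + -(e1 N) ∈ ball (-(e1 N)) (1:ℝ) := by
            rw [mem_ball_iff_norm]
            rw [mem_ball_zero_iff] at hz
            simpa using hz
          rw [hP_def, indicator_of_mem hz', indicator_of_mem hz, ← sub_eq_add_neg]
        · have hz' : z + -(e1 N) ∉ ball (-(e1 N)) (1:ℝ) := by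
            rw [mem_ball_iff_norm]
            rw [mem_ball_zero_iff] at hz
            simpa using hz
          rw [hP_def, indicator_of_notMem hz', indicator_of_notMem hz]
      rw [← lintegral_indicator measurableSet_ball, ← lintegral_congr hPc, htr, hP_def,
        lintegral_indicator measurableSet_ball]
    rw [hstep1, hstep2, hstep3, hstep4, ENNReal.toReal_mul,
      ENNReal.toReal_ofReal (by positivity)]
  -- comparisons
  have hΛΘ : ∀ ρ : ℝ, Λ ρ ≤ Θ ρ := fun ρ => lintegral_mono_set hsub
  have hΛmono : ∀ ρ ρ' : ℝ, 0 < ρ → ρ ≤ ρ' → Λ ρ' ≤ Λ ρ := by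
    intro ρ ρ' h1 h2
    exact lintegral_mono fun w => hqmono _ _ _ h1 h2 (norm_nonneg w)
  have hsplit : ∀ ρ ρ' : ℝ, 0 < ρ → ρ ≤ ρ' → Λ ρ + Θ ρ' ≤ Λ ρ' + Θ ρ := by
    intro ρ ρ' h1 h2
    have hD : ∀ σ : ℝ, Θ σ = Λ σ +
        ∫⁻ w in (ball (0 : Euc N) 2 \ ball (-(e1 N)) (1:ℝ)), q (σ * ‖w‖) := by
      intro σ
      rw [hΘ_def, hΛ_def]
      simp only
      rw [show ball (0 : Euc N) 2
            = ball (-(e1 N)) (1:ℝ) ∪ (ball (0 : Euc N) 2 \ ball (-(e1 N)) (1:ℝ)) from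
          (union_diff_cancel hsub).symm]
      rw [lintegral_union (measurableSet_ball.diff measurableSet_ball) disjoint_sdiff_right]
      congr 1
      rw [union_diff_cancel hsub]
    rw [hD ρ', hD ρ]
    have hDm : (∫⁻ w in (ball (0 : Euc N) 2 \ ball (-(e1 N)) (1:ℝ)), q (ρ' * ‖w‖))
        ≤ ∫⁻ w in (ball (0 : Euc N) 2 \ ball (-(e1 N)) (1:ℝ)), q (ρ * ‖w‖) :=
      lintegral_mono fun w => hqmono _ _ _ h1 h2 (norm_nonneg w)
    calc Λ ρ + (Λ ρ' + ∫⁻ w in (ball (0 : Euc N) 2 \ ball (-(e1 N)) (1:ℝ)), q (ρ' * ‖w‖))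
        ≤ Λ ρ + (Λ ρ' + ∫⁻ w in (ball (0 : Euc N) 2 \ ball (-(e1 N)) (1:ℝ)), q (ρ * ‖w‖)) :=
          add_le_add_right (add_le_add_right hDm _) _
      _ = Λ ρ' + (Λ ρ + ∫⁻ w in (ball (0 : Euc N) 2 \ ball (-(e1 N)) (1:ℝ)), q (ρ * ‖w‖)) := by
          ring
  -- finiteness
  have hcne : c ≠ ∞ := ENNReal.mul_ne_top (ENNReal.natCast_ne_top N) measure_ball_lt_top.ne
  have hΘfin : ∀ ρ : ℝ, 1/2 ≤ ρ → ρ ≤ 3/2 → Θ ρ ≠ ∞ := by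
    intro ρ h1 h2
    have hρ : 0 < ρ := by linarith
    rw [hΘeq ρ hρ]
    refine ENNReal.mul_ne_top (ENNReal.mul_ne_top hcne ?_) ?_
    · exact ENNReal.inv_ne_top.mpr (pow_ne_zero _ (ENNReal.ofReal_pos.mpr hρ).ne')
    · exact ne_top_of_le_ne_top hK3 (hKmono _ _ (by linarith))
  have hΛfin : ∀ ρ : ℝ, 1/2 ≤ ρ → ρ ≤ 3/2 → Λ ρ ≠ ∞ := fun ρ h1 h2 =>
    ne_top_of_le_ne_top (hΘfin ρ h1 h2) (hΛΘ ρ)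
  -- real constants
  set k3 : ℝ := (K 3).toReal with hk3_def
  set cr : ℝ := c.toReal with hcr_def
  have hk3nn : 0 ≤ k3 := ENNReal.toReal_nonneg
  have hcrnn : 0 ≤ cr := ENNReal.toReal_nonneg
  set L : ℝ := N * (3/2)^(N-1) with hL_def
  have hLnn : 0 ≤ L := by positivity
  set M : ℝ := cr * 2^N * k3 with hM_def
  have hMnn : 0 ≤ M := by positivity
  refine ⟨L * M + (3/2)^N * (cr * k3 * 4^N) * L, ?_⟩
  suffices key : ∀ s s' : ℝ, 1/2 ≤ s → s ≤ 3/2 → 1/2 ≤ s' → s' ≤ 3/2 → s ≤ s' →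
      |psi N gb s s - psi N gb s' s'| ≤ (L * M + (3/2)^N * (cr * k3 * 4^N) * L) * (s' - s) by
    intro r r' h1 h2 h3 h4
    rcases le_total r r' with h | h
    · rw [abs_sub_comm (r : ℝ), abs_of_nonneg (by linarith : (0:ℝ) ≤ r' - r)]
      exact key r r' h1 h2 h3 h4 h
    · rw [abs_sub_comm (psi N gb r r), abs_of_nonneg (by linarith : (0:ℝ) ≤ r - r')]
      exact key r' r h3 h4 h1 h2 h
  intro s s' hs1 hs2 hs1' hs2' hss
  have hs0 : 0 < s := by linarith
  have hs0' : 0 < s' := by linarith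
  have hΛsfin := hΛfin s hs1 hs2
  have hΛs'fin := hΛfin s' hs1' hs2'
  have hΘsfin := hΘfin s hs1 hs2
  have hΘs'fin := hΘfin s' hs1' hs2'
  set a : ℝ := (Λ s).toReal with ha_def
  set a' : ℝ := (Λ s').toReal with ha'_def
  have hann : 0 ≤ a := ENNReal.toReal_nonneg
  have ha'nn : 0 ≤ a' := ENNReal.toReal_nonneg
  have f1 : a' ≤ a := ENNReal.toReal_mono hΛsfin (hΛmono s s' hs0 hss)
  set θ : ℝ := (Θ s).toReal with hθ_def2
  set θ' : ℝ := (Θ s').toReal with hθ'_def2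
  have hθnn : 0 ≤ θ := ENNReal.toReal_nonneg
  have hθ'nn : 0 ≤ θ' := ENNReal.toReal_nonneg
  have f2 : a + θ' ≤ a' + θ := by
    have h := hsplit s s' hs0 hss
    have h2 := ENNReal.toReal_mono (ENNReal.add_ne_top.mpr ⟨hΛs'fin, hΘsfin⟩) h
    rwa [ENNReal.toReal_add hΛsfin hΘs'fin, ENNReal.toReal_add hΛs'fin hΘsfin] at h2
  have hθeqR : ∀ ρ : ℝ, 1/2 ≤ ρ → ρ ≤ 3/2 →
      (Θ ρ).toReal = cr * (ρ^N)⁻¹ * (K (2*ρ)).toReal := by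
    intro ρ h1 h2
    have hρ : 0 < ρ := by linarith
    rw [hΘeq ρ hρ, ENNReal.toReal_mul, ENNReal.toReal_mul, ENNReal.toReal_inv,
      ENNReal.toReal_pow, ENNReal.toReal_ofReal hρ.le]
  have g1 : (K (2*s)).toReal ≤ (K (2*s')).toReal :=
    ENNReal.toReal_mono (ne_top_of_le_ne_top hK3 (hKmono _ _ (by linarith)))
      (hKmono _ _ (by linarith))
  have g2 : (K (2*s')).toReal ≤ k3 := ENNReal.toReal_mono hK3 (hKmono _ _ (by linarith))
  have hKnn : (0:ℝ) ≤ (K (2*s')).toReal := ENNReal.toReal_nonneg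
  have hKnn2 : (0:ℝ) ≤ (K (2*s)).toReal := ENNReal.toReal_nonneg
  have hsN : (1/2:ℝ)^N ≤ s^N := pow_le_pow_left₀ (by norm_num) hs1 N
  have hs'N : (1/2:ℝ)^N ≤ s'^N := pow_le_pow_left₀ (by norm_num) hs1' N
  have hsN32 : s^N ≤ (3/2:ℝ)^N := pow_le_pow_left₀ hs0.le hs2 N
  have hsNpos : 0 < s^N := pow_pos hs0 N
  have hs'Npos : 0 < s'^N := pow_pos hs0' N
  have hmonoN : s^N ≤ s'^N := pow_le_pow_left₀ hs0.le hss N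
  have hinv2 : (s'^N)⁻¹ ≤ 2^N := by
    rw [show ((2:ℝ)^N = ((1/2:ℝ)^N)⁻¹) from by rw [one_div, inv_pow, inv_inv]]
    exact inv_anti₀ (by positivity) hs'N
  have f6 : s'^N - s^N ≤ L * (s' - s) := by
    have hgeom : (∑ i ∈ Finset.range N, s'^i * s^(N-1-i)) * (s' - s) = s'^N - s^N :=
      geom_sum₂_mul s' s N
    have hsum : (∑ i ∈ Finset.range N, s'^i * s^(N-1-i)) ≤ N * (3/2)^(N-1) := by
      calc (∑ i ∈ Finset.range N, s'^i * s^(N-1-i))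
          ≤ ∑ _i ∈ Finset.range N, (3/2:ℝ)^(N-1) := by
            apply Finset.sum_le_sum
            intro i hi
            have hi' : i < N := Finset.mem_range.mp hi
            calc s'^i * s^(N-1-i) ≤ (3/2:ℝ)^i * (3/2:ℝ)^(N-1-i) :=
                  mul_le_mul (pow_le_pow_left₀ hs0'.le hs2' i)
                    (pow_le_pow_left₀ hs0.le hs2 _) (by positivity) (by positivity)
              _ = (3/2:ℝ)^(N-1) := by rw [← pow_add]; congr 1; omega
        _ = N * (3/2)^(N-1) := by rw [Finset.sum_const, Finset.card_range, nsmul_eq_mul]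
    rw [← hgeom, hL_def]
    exact mul_le_mul_of_nonneg_right hsum (by linarith)
  have f5 : (s^N)⁻¹ - (s'^N)⁻¹ ≤ 4^N * (s'^N - s^N) := by
    rw [inv_sub_inv hsNpos.ne' hs'Npos.ne']
    have hprod : (1/4:ℝ)^N ≤ s^N * s'^N := by
      calc (1/4:ℝ)^N = (1/2:ℝ)^N * (1/2:ℝ)^N := by rw [← mul_pow]; norm_num
        _ ≤ s^N * s'^N := mul_le_mul hsN hs'N (by positivity) (by linarith)
    have h4 : ((s^N * s'^N))⁻¹ ≤ 4^N := by
      rw [show ((4:ℝ)^N = ((1/4:ℝ)^N)⁻¹) from by rw [one_div, inv_pow, inv_inv]]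
      exact inv_anti₀ (by positivity) hprod
    rw [div_eq_mul_inv]
    calc (s'^N - s^N) * (s^N * s'^N)⁻¹ ≤ (s'^N - s^N) * 4^N :=
          mul_le_mul_of_nonneg_left h4 (by linarith)
      _ = 4^N * (s'^N - s^N) := mul_comm _ _
  have f4 : θ - θ' ≤ cr * k3 * (4^N * (s'^N - s^N)) := by
    have ht1 : θ = cr * (s^N)⁻¹ * (K (2*s)).toReal := hθeqR s hs1 hs2
    have ht2 : θ' = cr * (s'^N)⁻¹ * (K (2*s')).toReal := hθeqR s' hs1' hs2'
    have hi1 : (s'^N)⁻¹ ≤ (s^N)⁻¹ := inv_anti₀ hsNpos hmonoN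
    rw [ht1, ht2]
    have step : (s^N)⁻¹ * (K (2*s)).toReal - (s'^N)⁻¹ * (K (2*s')).toReal
        ≤ ((s^N)⁻¹ - (s'^N)⁻¹) * k3 := by
      nlinarith [g1, g2, hKnn, hKnn2, inv_pos.mpr hsNpos, inv_pos.mpr hs'Npos, hi1]
    nlinarith [mul_le_mul_of_nonneg_left step hcrnn,
      mul_le_mul_of_nonneg_left f5 (mul_nonneg hcrnn hk3nn)]
  have f7 : a' ≤ M := by
    have h1 : a' ≤ cr * (s'^N)⁻¹ * (K (2*s')).toReal := by
      rw [← hθeqR s' hs1' hs2']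
      exact ENNReal.toReal_mono hΘs'fin (hΛΘ s')
    have h2 : cr * (s'^N)⁻¹ * (K (2*s')).toReal ≤ cr * 2^N * k3 := by
      apply mul_le_mul (mul_le_mul le_rfl hinv2 (by positivity) hcrnn) g2 hKnn (by positivity)
    rw [hM_def]
    linarith
  rw [hpsi s hs0, hpsi s' hs0', ← ha_def, ← ha'_def]
  have hup : s^N * a - s'^N * a' ≤ ((3/2)^N * (cr * k3 * 4^N) * L) * (s' - s) := by
    have h1 : s^N * a - s'^N * a' ≤ s^N * (a - a') := by
      nlinarith [mul_nonneg (sub_nonneg.mpr hmonoN) ha'nn]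
    have h2 : s^N * (a - a') ≤ (3/2)^N * (a - a') :=
      mul_le_mul_of_nonneg_right hsN32 (by linarith)
    have h4 : θ - θ' ≤ cr * k3 * (4^N * (L * (s' - s))) := by
      refine le_trans f4 ?_
      exact mul_le_mul_of_nonneg_left (mul_le_mul_of_nonneg_left f6 (by positivity))
        (mul_nonneg hcrnn hk3nn)
    have h5 : (3/2:ℝ)^N * (a - a') ≤ (3/2:ℝ)^N * (cr * k3 * (4^N * (L * (s' - s)))) :=
      mul_le_mul_of_nonneg_left (by linarith) (by positivity)
    calc s^N * a - s'^N * a' ≤ (3/2:ℝ)^N * (a - a') := le_trans h1 h2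
      _ ≤ (3/2:ℝ)^N * (cr * k3 * (4^N * (L * (s' - s)))) := h5
      _ = ((3/2)^N * (cr * k3 * 4^N) * L) * (s' - s) := by ring
  have hlow : s'^N * a' - s^N * a ≤ (L * M) * (s' - s) := by
    have h1 : s'^N * a' - s^N * a ≤ (s'^N - s^N) * a' := by
      nlinarith [mul_nonneg hsNpos.le (sub_nonneg.mpr f1)]
    have h2 : (s'^N - s^N) * a' ≤ (s'^N - s^N) * M :=
      mul_le_mul_of_nonneg_left f7 (by linarith)
    have h3 : (s'^N - s^N) * M ≤ (L * (s' - s)) * M := mul_le_mul_of_nonneg_right f6 hMnn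
    calc s'^N * a' - s^N * a ≤ (s'^N - s^N) * a' := h1
      _ ≤ (s'^N - s^N) * M := h2
      _ ≤ (L * (s' - s)) * M := h3
      _ = (L * M) * (s' - s) := by ring
  rw [abs_sub_le_iff]
  have hC1 : (0:ℝ) ≤ L * M := mul_nonneg hLnn hMnn
  have hC2 : (0:ℝ) ≤ (3/2:ℝ)^N * (cr * k3 * 4^N) * L := by positivity
  constructor
  · nlinarith [hup, mul_le_mul_of_nonneg_right hC1 (by linarith : (0:ℝ) ≤ s' - s)]
  · nlinarith [hlow, mul_le_mul_of_nonneg_right hC2 (by linarith : (0:ℝ) ≤ s' - s)]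
end
end

section
/- Let N ≥ 2 and let g : ℝ^N \ {0} → (0,∞) be a radial, decreasing, admissible function. Then there exists a constant C = C(N,g) such that for every 0 < σ ≤ 1/4 one has |∫_{A(σ) ∩ B(0,2σ)} g(w) dw − ∫_{A(−σ) ∩ B(0,2σ)} g(w) dw| ≤ C σ, where A(σ) = B(−e₁, 1+σ) \ B(−e₁, 1) and A(−σ) = B(−e₁, 1) \ B(−e₁, 1−σ). -/
open MeasureTheory Metric Set
open scoped ENNReal NNReal BigOperators Pointwise

noncomputable section

set_option maxHeartbeats 2000000

namespace AnnuliAux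

/-- truncation of `gb` outside `(0,1)`. -/
def qfun (gb : ℝ → ℝ) : ℝ → ℝ := (Set.Ioo (0:ℝ) 1).indicator gb

lemma qfun_nonneg (gb : ℝ → ℝ) (hpos : ∀ t : ℝ, 0 < t → 0 < gb t) (t : ℝ) :
    0 ≤ qfun gb t := by
  unfold qfun
  by_cases ht : t ∈ Set.Ioo (0:ℝ) 1
  · rw [Set.indicator_of_mem ht]; exact (hpos t ht.1).le
  · rw [Set.indicator_of_notMem ht]

lemma qfun_of_mem (gb : ℝ → ℝ) {t : ℝ} (ht : t ∈ Set.Ioo (0:ℝ) 1) : qfun gb t = gb t :=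
  Set.indicator_of_mem ht gb

lemma qfun_le (gb : ℝ → ℝ) (hpos : ∀ t : ℝ, 0 < t → 0 < gb t)
    (hdec : AntitoneOn gb (Set.Ioi (0 : ℝ))) {s t : ℝ} (hs : 0 < s) (hst : s ≤ t) :
    qfun gb t ≤ gb s := by
  unfold qfun
  by_cases ht : t ∈ Set.Ioo (0:ℝ) 1
  · rw [Set.indicator_of_mem ht]
    exact hdec (Set.mem_Ioi.mpr hs) (Set.mem_Ioi.mpr ht.1) hst
  · rw [Set.indicator_of_notMem ht]; exact (hpos s hs).le

lemma qfun_measurable (gb : ℝ → ℝ) (hdec : AntitoneOn gb (Set.Ioi (0 : ℝ))) :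
    Measurable (qfun gb) := by
  apply measurable_of_Ioi
  intro a
  have h1 : MeasurableSet (Set.Ioo (0:ℝ) 1 ∩ gb ⁻¹' Set.Ioi a) := by
    apply Set.OrdConnected.measurableSet
    constructor
    intro x hx y hy z hz
    refine ⟨⟨lt_of_lt_of_le hx.1.1 hz.1, lt_of_le_of_lt hz.2 hy.1.2⟩, ?_⟩
    have h0z : (0:ℝ) < z := lt_of_lt_of_le hx.1.1 hz.1
    exact lt_of_lt_of_le hy.2 (hdec (Set.mem_Ioi.mpr h0z) (Set.mem_Ioi.mpr hy.1.1) hz.2)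
  by_cases ha : a < 0
  · have : qfun gb ⁻¹' Set.Ioi a =
        (Set.Ioo (0:ℝ) 1 ∩ gb ⁻¹' Set.Ioi a) ∪ (Set.Ioo (0:ℝ) 1)ᶜ := by
      ext t
      by_cases ht : t ∈ Set.Ioo (0:ℝ) 1 <;>
        simp [qfun, Set.indicator_of_mem, Set.indicator_of_notMem, ht, ha]
    rw [this]
    exact h1.union measurableSet_Ioo.compl
  · have : qfun gb ⁻¹' Set.Ioi a = Set.Ioo (0:ℝ) 1 ∩ gb ⁻¹' Set.Ioi a := by
      ext t
      by_cases ht : t ∈ Set.Ioo (0:ℝ) 1 <;>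
        simp [qfun, Set.indicator_of_mem, Set.indicator_of_notMem, ht, ha, le_of_not_gt ha,
          not_lt.mp ha]
    rw [this]; exact h1

lemma sq_lt_iff' {a b : ℝ} (ha : 0 ≤ a) (hb : 0 ≤ b) : a < b ↔ a^2 < b^2 := by
  constructor <;> intro h <;> nlinarith

lemma one_le_iff_sq {a : ℝ} (ha : 0 ≤ a) : 1 ≤ a ↔ 1 ≤ a^2 := by
  constructor <;> intro h <;> nlinarith

lemma sq_le_iff' {a b : ℝ} (ha : 0 ≤ a) (hb : 0 ≤ b) : a ≤ b ↔ a^2 ≤ b^2 := by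
  constructor <;> intro h <;> nlinarith

/-- Slice description of the outer annulus condition. -/
lemma slice_mem_plus {σ ρ : ℝ} (hσ : 0 < σ) (hσ4 : σ ≤ 1/4) (hρ : 0 ≤ ρ) (t : ℝ) :
    ((1:ℝ) ≤ (1+t)^2 + ρ^2 ∧ (1+t)^2 + ρ^2 < (1+σ)^2 ∧ t^2 + ρ^2 < (2*σ)^2) ↔
    (t ∈ Set.Ico (Real.sqrt (1 - ρ^2) - 1) (Real.sqrt ((1+σ)^2 - ρ^2) - 1) ∧
     t ∈ Set.Ioo (-Real.sqrt ((2*σ)^2 - ρ^2)) (Real.sqrt ((2*σ)^2 - ρ^2))) := by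
  constructor
  · rintro ⟨h1, h2, h3⟩
    have hρσ : ρ^2 < (2*σ)^2 := by nlinarith [sq_nonneg t]
    have habs : |t| < Real.sqrt ((2*σ)^2 - ρ^2) := by
      rw [← Real.sqrt_sq_eq_abs]
      exact Real.sqrt_lt_sqrt (sq_nonneg t) (by linarith)
    have hIoo := abs_lt.mp habs
    have hm2σ : Real.sqrt ((2*σ)^2 - ρ^2) ≤ 2*σ := by
      have := Real.sqrt_le_sqrt (show (2*σ)^2 - ρ^2 ≤ (2*σ)^2 by nlinarith)
      rwa [Real.sqrt_sq (by linarith)] at this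
    have h1t : 0 < 1 + t := by
      have := hIoo.1; nlinarith
    constructor
    · constructor
      · have h' : Real.sqrt (1 - ρ^2) ≤ Real.sqrt ((1+t)^2) :=
          Real.sqrt_le_sqrt (by linarith)
        rw [Real.sqrt_sq h1t.le] at h'
        linarith
      · have h' : Real.sqrt ((1+t)^2) < Real.sqrt ((1+σ)^2 - ρ^2) :=
          Real.sqrt_lt_sqrt (sq_nonneg _) (by linarith)
        rw [Real.sqrt_sq h1t.le] at h'
        linarith
    · exact ⟨hIoo.1, hIoo.2⟩
  · rintro ⟨⟨hl, hu⟩, hm1, hm2⟩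
    have hc : 0 < (2*σ)^2 - ρ^2 := by
      by_contra hc
      push_neg at hc
      rw [Real.sqrt_eq_zero'.mpr hc] at hm1 hm2
      simp only [neg_zero] at hm1
      linarith
    have ht2 : t^2 < (2*σ)^2 - ρ^2 := by
      have habs : |t| < Real.sqrt ((2*σ)^2 - ρ^2) := abs_lt.mpr ⟨hm1, hm2⟩
      have h2 : |t|^2 < (Real.sqrt ((2*σ)^2 - ρ^2))^2 := by
        nlinarith [abs_nonneg t, Real.sqrt_nonneg ((2*σ)^2 - ρ^2)]
      rwa [sq_abs, Real.sq_sqrt hc.le] at h2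
    have hρσ : ρ^2 < (2*σ)^2 := by nlinarith [sq_nonneg t]
    have hm2σ : Real.sqrt ((2*σ)^2 - ρ^2) ≤ 2*σ := by
      have := Real.sqrt_le_sqrt (show (2*σ)^2 - ρ^2 ≤ (2*σ)^2 by nlinarith)
      rwa [Real.sqrt_sq (by linarith)] at this
    have h1t : 0 < 1 + t := by nlinarith
    refine ⟨?_, ?_, by linarith⟩
    · rcases le_or_gt (1 - ρ^2) 0 with h0 | h0
      · nlinarith
      · have := Real.sq_sqrt h0.le
        have h' : Real.sqrt (1 - ρ^2) ≤ 1 + t := by linarith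
        nlinarith [Real.sqrt_nonneg (1 - ρ^2)]
    · have harg : 0 ≤ (1+σ)^2 - ρ^2 := by nlinarith
      have := Real.sq_sqrt harg
      have h' : 1 + t < Real.sqrt ((1+σ)^2 - ρ^2) := by linarith
      nlinarith [Real.sqrt_nonneg ((1+σ)^2 - ρ^2)]

/-- Slice description of the inner annulus condition. -/
lemma slice_mem_minus {σ ρ : ℝ} (hσ : 0 < σ) (hσ4 : σ ≤ 1/4) (hρ : 0 ≤ ρ) (t : ℝ) :
    (((1-σ):ℝ)^2 ≤ (1+t)^2 + ρ^2 ∧ (1+t)^2 + ρ^2 < 1 ∧ t^2 + ρ^2 < (2*σ)^2) ↔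
    (t ∈ Set.Ico (Real.sqrt ((1-σ)^2 - ρ^2) - 1) (Real.sqrt (1 - ρ^2) - 1) ∧
     t ∈ Set.Ioo (-Real.sqrt ((2*σ)^2 - ρ^2)) (Real.sqrt ((2*σ)^2 - ρ^2))) := by
  constructor
  · rintro ⟨h1, h2, h3⟩
    have hρσ : ρ^2 < (2*σ)^2 := by nlinarith [sq_nonneg t]
    have habs : |t| < Real.sqrt ((2*σ)^2 - ρ^2) := by
      rw [← Real.sqrt_sq_eq_abs]
      exact Real.sqrt_lt_sqrt (sq_nonneg t) (by linarith)
    have hIoo := abs_lt.mp habs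
    have hm2σ : Real.sqrt ((2*σ)^2 - ρ^2) ≤ 2*σ := by
      have := Real.sqrt_le_sqrt (show (2*σ)^2 - ρ^2 ≤ (2*σ)^2 by nlinarith)
      rwa [Real.sqrt_sq (by linarith)] at this
    have h1t : 0 < 1 + t := by
      have := hIoo.1; nlinarith
    constructor
    · constructor
      · have h' : Real.sqrt ((1-σ)^2 - ρ^2) ≤ Real.sqrt ((1+t)^2) :=
          Real.sqrt_le_sqrt (by linarith)
        rw [Real.sqrt_sq h1t.le] at h'
        linarith
      · have h' : Real.sqrt ((1+t)^2) < Real.sqrt (1 - ρ^2) :=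
          Real.sqrt_lt_sqrt (sq_nonneg _) (by linarith)
        rw [Real.sqrt_sq h1t.le] at h'
        linarith
    · exact ⟨hIoo.1, hIoo.2⟩
  · rintro ⟨⟨hl, hu⟩, hm1, hm2⟩
    have hc : 0 < (2*σ)^2 - ρ^2 := by
      by_contra hc
      push_neg at hc
      rw [Real.sqrt_eq_zero'.mpr hc] at hm1 hm2
      simp only [neg_zero] at hm1
      linarith
    have ht2 : t^2 < (2*σ)^2 - ρ^2 := by
      have habs : |t| < Real.sqrt ((2*σ)^2 - ρ^2) := abs_lt.mpr ⟨hm1, hm2⟩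
      have h2 : |t|^2 < (Real.sqrt ((2*σ)^2 - ρ^2))^2 := by
        nlinarith [abs_nonneg t, Real.sqrt_nonneg ((2*σ)^2 - ρ^2)]
      rwa [sq_abs, Real.sq_sqrt hc.le] at h2
    have hρσ : ρ^2 < (2*σ)^2 := by nlinarith [sq_nonneg t]
    have hm2σ : Real.sqrt ((2*σ)^2 - ρ^2) ≤ 2*σ := by
      have := Real.sqrt_le_sqrt (show (2*σ)^2 - ρ^2 ≤ (2*σ)^2 by nlinarith)
      rwa [Real.sqrt_sq (by linarith)] at this
    have h1t : 0 < 1 + t := by nlinarith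
    refine ⟨?_, ?_, by linarith⟩
    · have harg : 0 ≤ (1-σ)^2 - ρ^2 := by nlinarith
      have := Real.sq_sqrt harg
      have h' : Real.sqrt ((1-σ)^2 - ρ^2) ≤ 1 + t := by linarith
      nlinarith [Real.sqrt_nonneg ((1-σ)^2 - ρ^2)]
    · have harg : 0 ≤ 1 - ρ^2 := by nlinarith
      have := Real.sq_sqrt harg
      have h' : 1 + t < Real.sqrt (1 - ρ^2) := by linarith
      nlinarith [Real.sqrt_nonneg (1 - ρ^2)]

/-- The main one-dimensional slice estimate. -/
lemma slice_est (gb : ℝ → ℝ) (hpos : ∀ t : ℝ, 0 < t → 0 < gb t)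
    (hdec : AntitoneOn gb (Set.Ioi (0 : ℝ)))
    {σ ρ : ℝ} (hσ : 0 < σ) (hσ4 : σ ≤ 1/4) (hρ : 0 < ρ) (hρσ : ρ < 2*σ) :
    (∫⁻ t in Set.Ico (Real.sqrt (1 - ρ^2) - 1) (Real.sqrt ((1+σ)^2 - ρ^2) - 1) ∩
        Set.Ioo (-Real.sqrt ((2*σ)^2 - ρ^2)) (Real.sqrt ((2*σ)^2 - ρ^2)),
        ENNReal.ofReal (qfun gb (Real.sqrt (t^2 + ρ^2)))
      ≤ (∫⁻ t in Set.Ico (Real.sqrt ((1-σ)^2 - ρ^2) - 1) (Real.sqrt (1 - ρ^2) - 1) ∩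
            Set.Ioo (-Real.sqrt ((2*σ)^2 - ρ^2)) (Real.sqrt ((2*σ)^2 - ρ^2)),
            ENNReal.ofReal (qfun gb (Real.sqrt (t^2 + ρ^2))))
          + ENNReal.ofReal (2*ρ^2 * gb ρ) + ENNReal.ofReal (9*σ^2 * gb (σ/2)))
    ∧ ((∫⁻ t in Set.Ico (Real.sqrt ((1-σ)^2 - ρ^2) - 1) (Real.sqrt (1 - ρ^2) - 1) ∩
            Set.Ioo (-Real.sqrt ((2*σ)^2 - ρ^2)) (Real.sqrt ((2*σ)^2 - ρ^2)),
            ENNReal.ofReal (qfun gb (Real.sqrt (t^2 + ρ^2))))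
      ≤ (∫⁻ t in Set.Ico (Real.sqrt (1 - ρ^2) - 1) (Real.sqrt ((1+σ)^2 - ρ^2) - 1) ∩
            Set.Ioo (-Real.sqrt ((2*σ)^2 - ρ^2)) (Real.sqrt ((2*σ)^2 - ρ^2)),
            ENNReal.ofReal (qfun gb (Real.sqrt (t^2 + ρ^2))))
          + ENNReal.ofReal (9*σ^2 * gb (σ/2))) := by
  set G : ℝ → ℝ≥0∞ := fun t => ENNReal.ofReal (qfun gb (Real.sqrt (t^2 + ρ^2))) with hG
  set m : ℝ := Real.sqrt ((2*σ)^2 - ρ^2) with hm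
  set a : ℝ := Real.sqrt ((1+σ)^2 - ρ^2) with ha
  set b : ℝ := Real.sqrt ((1-σ)^2 - ρ^2) with hb
  set s1 : ℝ := Real.sqrt (1 - ρ^2) with hs1
  set γ : ℝ := 1 - s1 with hγ
  set Bp : ℝ := a - 1 with hBp
  set Bm : ℝ := b - 1 with hBm
  -- basic numeric facts
  have hρ1 : ρ ≤ 1/2 := by linarith
  have hρ14 : ρ^2 ≤ 1/4 := by nlinarith
  have hρsq : ρ^2 < (2*σ)^2 := by nlinarith
  have h2σ : 2*σ ≤ 1/2 := by linarith
  have h1ρ : (0:ℝ) ≤ 1 - ρ^2 := by nlinarith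
  have hm0 : 0 < m := Real.sqrt_pos.mpr (by linarith)
  have hm2σ : m ≤ 2*σ := by
    rw [hm]
    have := Real.sqrt_le_sqrt (show (2*σ)^2 - ρ^2 ≤ (2*σ)^2 by nlinarith)
    rwa [Real.sqrt_sq (by linarith)] at this
  have hs1le : s1 ≤ 1 := by
    rw [hs1]
    have := Real.sqrt_le_sqrt (show 1 - ρ^2 ≤ 1 by nlinarith)
    rwa [Real.sqrt_one] at this
  have hγ0 : 0 ≤ γ := by rw [hγ]; linarith
  have hγρ : γ ≤ ρ^2 := by
    have : 1 - ρ^2 ≤ s1 := by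
      rw [hs1]
      exact (Real.le_sqrt h1ρ (by nlinarith)).mpr (by nlinarith)
    rw [hγ]; linarith
  have hBpσ : σ/2 ≤ Bp := by
    have : 1 + σ/2 ≤ a := by
      rw [ha]
      exact (Real.le_sqrt (by linarith) (by nlinarith)).mpr (by nlinarith)
    rw [hBp]; linarith
  have hBmσ : Bm ≤ -σ := by
    have : b ≤ 1 - σ := by
      rw [hb]
      have := Real.sqrt_le_sqrt (show (1-σ)^2 - ρ^2 ≤ (1-σ)^2 by nlinarith)
      rwa [Real.sqrt_sq (by linarith)] at this
    rw [hBm]; linarith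
  have haup : a ≤ 1 + σ := by
    rw [ha]
    have := Real.sqrt_le_sqrt (show (1+σ)^2 - ρ^2 ≤ (1+σ)^2 by nlinarith)
    rwa [Real.sqrt_sq (by linarith)] at this
  have halow : 1 + σ - ρ^2 ≤ a := by
    rw [ha]
    refine (Real.le_sqrt (by nlinarith) (by nlinarith)).mpr ?_
    nlinarith [mul_nonneg (sq_nonneg ρ) (show (0:ℝ) ≤ 1 + 2*σ - ρ^2 by nlinarith)]
  have hblow : 1 - σ - ρ^2 ≤ b := by
    rw [hb]
    refine (Real.le_sqrt (by nlinarith) (by nlinarith)).mpr ?_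
    nlinarith [mul_nonneg (sq_nonneg ρ) (show (0:ℝ) ≤ 1 - 2*σ - ρ^2 by nlinarith)]
  have hsum_up : Bp + Bm ≤ 0 := by
    have : b ≤ 1 - σ := by rw [hBm] at hBmσ; linarith
    rw [hBp, hBm]; linarith
  have hsum_low : -(2*ρ^2) ≤ Bp + Bm := by rw [hBp, hBm]; nlinarith
  -- endpoints rewriting : s1 - 1 = -γ
  have hept : s1 - 1 = -γ := by rw [hγ]; ring
  set x : ℝ := min Bp m with hx
  set x' : ℝ := min (-Bm) m with hx'
  have hxx' : x ≤ x' := min_le_min (by linarith) le_rfl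
  -- the exceptional interval bound
  have hRbound : ∫⁻ t in Set.Ico x x', G t ≤ ENNReal.ofReal (9*σ^2 * gb (σ/2)) := by
    have hgσ2 : 0 ≤ gb (σ/2) := (hpos _ (by linarith)).le
    have hpt : ∀ t ∈ Set.Ico x x', G t ≤ ENNReal.ofReal (gb (σ/2)) := by
      intro t ht
      have harg : σ/2 ≤ Real.sqrt (t^2 + ρ^2) := by
        rcases le_or_gt (σ/2) ρ with h | h
        · have : ρ ≤ Real.sqrt (t^2 + ρ^2) := by
            have := Real.sqrt_le_sqrt (show ρ^2 ≤ t^2 + ρ^2 by nlinarith)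
            rwa [Real.sqrt_sq hρ.le] at this
          linarith
        · have hmge : σ/2 ≤ m := by
            rw [hm]
            exact (Real.le_sqrt (by linarith) (by nlinarith)).mpr (by nlinarith)
          have htσ : σ/2 ≤ t := by
            have h1 : σ/2 ≤ x := le_min (by linarith) hmge
            linarith [ht.1]
          have : t ≤ Real.sqrt (t^2 + ρ^2) := by
            have := Real.sqrt_le_sqrt (show t^2 ≤ t^2 + ρ^2 by nlinarith)
            rwa [Real.sqrt_sq (by linarith)] at this
          linarith
      exact ENNReal.ofReal_le_ofReal (qfun_le gb hpos hdec (by linarith) harg)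
    calc ∫⁻ t in Set.Ico x x', G t
        ≤ ∫⁻ _ in Set.Ico x x', ENNReal.ofReal (gb (σ/2)) :=
          setLIntegral_mono measurable_const hpt
      _ = ENNReal.ofReal (gb (σ/2)) * volume (Set.Ico x x') := setLIntegral_const _ _
      _ ≤ ENNReal.ofReal (gb (σ/2)) * ENNReal.ofReal (9*σ^2) := by
          gcongr
          rw [Real.volume_Ico]
          apply ENNReal.ofReal_le_ofReal
          have hvu : x' - x ≤ 2*ρ^2 := by
            rcases le_total Bp m with h | h
            · have hxe : x = Bp := min_eq_left h
              have : x' ≤ -Bm := min_le_left _ _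
              rw [hxe]; linarith
            · have hxe : x = m := min_eq_right h
              have hxe' : x' = m := min_eq_right (le_trans h (by linarith))
              rw [hxe, hxe']; nlinarith
          nlinarith
      _ = ENNReal.ofReal (9*σ^2 * gb (σ/2)) := by
          rw [← ENNReal.ofReal_mul hgσ2, mul_comm]
  -- the central interval bound
  have hE1 : ∫⁻ t in Set.Icc (-γ) γ, G t ≤ ENNReal.ofReal (2*ρ^2 * gb ρ) := by
    have hgρ : 0 ≤ gb ρ := (hpos _ hρ).le
    have hpt : ∀ t ∈ Set.Icc (-γ) γ, G t ≤ ENNReal.ofReal (gb ρ) := by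
      intro t _
      have harg : ρ ≤ Real.sqrt (t^2 + ρ^2) := by
        have := Real.sqrt_le_sqrt (show ρ^2 ≤ t^2 + ρ^2 by nlinarith)
        rwa [Real.sqrt_sq hρ.le] at this
      exact ENNReal.ofReal_le_ofReal (qfun_le gb hpos hdec hρ harg)
    calc ∫⁻ t in Set.Icc (-γ) γ, G t
        ≤ ∫⁻ _ in Set.Icc (-γ) γ, ENNReal.ofReal (gb ρ) :=
          setLIntegral_mono measurable_const hpt
      _ = ENNReal.ofReal (gb ρ) * volume (Set.Icc (-γ) γ) := setLIntegral_const _ _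
      _ ≤ ENNReal.ofReal (gb ρ) * ENNReal.ofReal (2*ρ^2) := by
          gcongr
          rw [Real.volume_Icc]
          apply ENNReal.ofReal_le_ofReal
          linarith
      _ = ENNReal.ofReal (2*ρ^2 * gb ρ) := by
          rw [← ENNReal.ofReal_mul hgρ, mul_comm]
  -- reflection of the Q integral
  have hrefl : (∫⁻ t in Set.Ico Bm (-γ) ∩ Set.Ioo (-m) m, G t)
      = ∫⁻ t in Set.Ioc γ (-Bm) ∩ Set.Ioo (-m) m, G t := by
    have hemb : MeasurableEmbedding (fun t : ℝ => -t) :=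
      (Homeomorph.neg ℝ).measurableEmbedding
    have hmp : MeasurePreserving (fun t : ℝ => -t) volume volume :=
      Measure.measurePreserving_neg _
    have := hmp.setLIntegral_comp_preimage_emb hemb G (Set.Ico Bm (-γ) ∩ Set.Ioo (-m) m)
    have hpre : (fun t : ℝ => -t) ⁻¹' (Set.Ico Bm (-γ) ∩ Set.Ioo (-m) m)
        = Set.Ioc γ (-Bm) ∩ Set.Ioo (-m) m := by
      ext t
      simp only [Set.mem_preimage, Set.mem_inter_iff, Set.mem_Ico, Set.mem_Ioo, Set.mem_Ioc]
      constructor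
      · rintro ⟨⟨h1, h2⟩, h3, h4⟩
        exact ⟨⟨by linarith, by linarith⟩, by linarith, by linarith⟩
      · rintro ⟨⟨h1, h2⟩, h3, h4⟩
        exact ⟨⟨by linarith, by linarith⟩, by linarith, by linarith⟩
    have hGeven : ∀ t : ℝ, G (-t) = G t := by
      intro t; simp only [hG, neg_sq]
    rw [hpre] at this
    calc (∫⁻ t in Set.Ico Bm (-γ) ∩ Set.Ioo (-m) m, G t)
        = ∫⁻ t in Set.Ioc γ (-Bm) ∩ Set.Ioo (-m) m, G (-t) := this.symm
      _ = ∫⁻ t in Set.Ioc γ (-Bm) ∩ Set.Ioo (-m) m, G t := by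
          apply lintegral_congr; intro t; exact hGeven t
  -- set inclusions
  have hPsub : Set.Ico (-γ) Bp ∩ Set.Ioo (-m) m ⊆ Set.Icc (-γ) γ ∪ Set.Ioo γ x := by
    rintro t ⟨⟨h1, h2⟩, h3, h4⟩
    rcases le_or_gt t γ with h | h
    · exact Or.inl ⟨h1, h⟩
    · exact Or.inr ⟨h, lt_min h2 h4⟩
  have hsub2' : Set.Ioo γ x' ⊆ Set.Ioo γ x ∪ Set.Ico x x' := by
    rintro t ⟨h1, h2⟩
    rcases lt_or_ge t x with h | h
    · exact Or.inl ⟨h1, h⟩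
    · exact Or.inr ⟨h, h2⟩
  have hsub3 : Set.Ioo γ x' ⊆ Set.Ioc γ (-Bm) ∩ Set.Ioo (-m) m := by
    rintro t ⟨h1, h2⟩
    have h2' : t < -Bm := lt_of_lt_of_le h2 (min_le_left _ _)
    have h2m : t < m := lt_of_lt_of_le h2 (min_le_right _ _)
    exact ⟨⟨h1, h2'.le⟩, by linarith, h2m⟩
  have hsub4 : Set.Ioc γ (-Bm) ∩ Set.Ioo (-m) m ⊆ Set.Ioo γ x' ∪ {x'} := by
    rintro t ⟨⟨h1, h2⟩, h3, h4⟩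
    rcases lt_or_ge t x' with h | h
    · exact Or.inl ⟨h1, h⟩
    · right
      have hle : t ≤ x' := by
        rcases le_total (-Bm) m with hc | hc
        · rw [hx', min_eq_left hc]; exact h2
        · rw [hx', min_eq_right hc] at h
          exact absurd h4 (not_lt.mpr h)
      exact Set.mem_singleton_iff.mpr (le_antisymm hle h)
  have hsub6 : Set.Ioo γ x ⊆ Set.Ico (-γ) Bp ∩ Set.Ioo (-m) m := by
    rintro t ⟨h1, h2⟩
    have h2' : t < Bp := lt_of_lt_of_le h2 (min_le_left _ _)
    have h2m : t < m := lt_of_lt_of_le h2 (min_le_right _ _)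
    exact ⟨⟨by linarith, h2'⟩, by linarith, h2m⟩
  have hsing : ∫⁻ t in ({x'} : Set ℝ), G t = 0 := by
    rw [lintegral_singleton, Real.volume_singleton, mul_zero]
  have hIooxx' : Set.Ioo γ x ⊆ Set.Ioo γ x' := Set.Ioo_subset_Ioo le_rfl hxx'
  constructor
  · rw [hept]
    calc ∫⁻ t in Set.Ico (-γ) Bp ∩ Set.Ioo (-m) m, G t
        ≤ ∫⁻ t in Set.Icc (-γ) γ ∪ Set.Ioo γ x, G t := lintegral_mono_set hPsub
      _ ≤ (∫⁻ t in Set.Icc (-γ) γ, G t) + ∫⁻ t in Set.Ioo γ x, G t :=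
          lintegral_union_le _ _ _
      _ ≤ ENNReal.ofReal (2*ρ^2 * gb ρ) + ∫⁻ t in Set.Ioo γ x', G t :=
          add_le_add hE1 (lintegral_mono_set hIooxx')
      _ ≤ ENNReal.ofReal (2*ρ^2 * gb ρ) +
            ∫⁻ t in Set.Ioc γ (-Bm) ∩ Set.Ioo (-m) m, G t :=
          add_le_add_right (lintegral_mono_set hsub3) _
      _ = (∫⁻ t in Set.Ico Bm (-γ) ∩ Set.Ioo (-m) m, G t) + ENNReal.ofReal (2*ρ^2 * gb ρ) := by
          rw [hrefl]; ring
      _ ≤ (∫⁻ t in Set.Ico Bm (-γ) ∩ Set.Ioo (-m) m, G t) + ENNReal.ofReal (2*ρ^2 * gb ρ)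
            + ENNReal.ofReal (9*σ^2 * gb (σ/2)) := le_self_add
  · rw [hept]
    calc ∫⁻ t in Set.Ico Bm (-γ) ∩ Set.Ioo (-m) m, G t
        = ∫⁻ t in Set.Ioc γ (-Bm) ∩ Set.Ioo (-m) m, G t := hrefl
      _ ≤ ∫⁻ t in Set.Ioo γ x' ∪ {x'}, G t := lintegral_mono_set hsub4
      _ ≤ (∫⁻ t in Set.Ioo γ x', G t) + ∫⁻ t in ({x'} : Set ℝ), G t :=
          lintegral_union_le _ _ _
      _ = ∫⁻ t in Set.Ioo γ x', G t := by rw [hsing, add_zero]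
      _ ≤ ∫⁻ t in Set.Ioo γ x ∪ Set.Ico x x', G t := lintegral_mono_set hsub2'
      _ ≤ (∫⁻ t in Set.Ioo γ x, G t) + ∫⁻ t in Set.Ico x x', G t :=
          lintegral_union_le _ _ _
      _ ≤ (∫⁻ t in Set.Ico (-γ) Bp ∩ Set.Ioo (-m) m, G t) + ENNReal.ofReal (9*σ^2 * gb (σ/2)) :=
          add_le_add (lintegral_mono_set hsub6) hRbound

lemma euc_norm_sq {d : ℕ} (x : Euc d) : ‖x‖^2 = ∑ i, (x i)^2 := by
  rw [EuclideanSpace.norm_eq, Real.sq_sqrt (Finset.sum_nonneg fun i _ => sq_nonneg _)]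
  exact Finset.sum_congr rfl fun i _ => by rw [Real.norm_eq_abs, sq_abs]

lemma euc_vol_singleton {d : ℕ} (hd : 0 < d) : volume ({0} : Set (Euc d)) = 0 := by
  have mp := EuclideanSpace.volume_preserving_symm_measurableEquiv_toLp (Fin d)
  have hpre : ({0} : Set (Euc d)) =
      ((MeasurableEquiv.toLp 2 (Fin d → ℝ)).symm) ⁻¹' {(0 : Fin d → ℝ)} := by
    ext z
    simp only [Set.mem_singleton_iff, Set.mem_preimage]
    constructor
    · rintro rfl; rfl
    · intro h
      apply ((MeasurableEquiv.toLp 2 (Fin d → ℝ)).symm).injective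
      simpa using h
  rw [hpre, mp.measure_preimage (measurableSet_singleton _).nullMeasurableSet]
  have h0 : ({0} : Set (Fin d → ℝ)) = Set.pi Set.univ (fun _ => ({0} : Set ℝ)) := by
    rw [Set.univ_pi_singleton]; rfl
  rw [h0, volume_pi_pi]
  exact Finset.prod_eq_zero (Finset.mem_univ (⟨0, hd⟩ : Fin d)) Real.volume_singleton

/-- Dyadic shell comparison. -/
lemma shell_bound {d : ℕ} (hd : 0 < d) (j : ℕ) (f : ℝ → ℝ≥0∞) (hf : Measurable f)
    (hmono : ∀ s t : ℝ, 0 < s → s ≤ t → t < 1 → f t ≤ f s) :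
    (∫⁻ w in ball (0 : Euc d) (1/2), ENNReal.ofReal (‖w‖ ^ j) * f ‖w‖)
      ≤ volume (ball (0 : Euc d) 1) * ENNReal.ofReal ((4:ℝ) ^ (d + j)) *
        ∫⁻ t in Set.Ioo (0:ℝ) 1, ENNReal.ofReal (t ^ (d + j - 1)) * f t := by
  haveI : Nontrivial (Euc d) :=
    Module.nontrivial_of_finrank_pos (R := ℝ)
      (by rw [finrank_euclideanSpace_fin]; exact hd)
  set r : ℕ → ℝ := fun k => (1/2)^k with hr
  have hrpos : ∀ k, 0 < r k := fun k => pow_pos (by norm_num) k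
  have hrmono : ∀ {p q : ℕ}, p ≤ q → r q ≤ r p := fun h =>
    pow_le_pow_of_le_one (by norm_num) (by norm_num) h
  have hrhalf : ∀ k, r (k+1) ≤ 1/2 := fun k => by
    have := hrmono (Nat.succ_le_succ (Nat.zero_le k))
    simpa [hr] using this
  have hrdouble : ∀ k, r (k+1) = 2 * r (k+2) := fun k => by
    show (1/2:ℝ)^(k+1) = 2 * (1/2:ℝ)^(k+2)
    rw [show k+2 = (k+1)+1 from rfl, pow_succ]; ring
  set S : ℕ → Set (Euc d) := fun k => closedBall (0 : Euc d) (r (k+1)) \ ball 0 (r (k+2))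
    with hS
  have hSmeas : ∀ k, MeasurableSet (S k) := fun k =>
    measurableSet_closedBall.diff measurableSet_ball
  have hSnorm : ∀ k, ∀ w ∈ S k, r (k+2) ≤ ‖w‖ ∧ ‖w‖ ≤ r (k+1) := by
    intro k w hw
    rcases hw with ⟨h1, h2⟩
    rw [mem_closedBall_zero_iff] at h1
    simp only [mem_ball_zero_iff, not_lt] at h2
    exact ⟨h2, h1⟩
  have hcover : ball (0 : Euc d) (1/2) ⊆ {0} ∪ ⋃ k : ℕ, S k := by
    intro w hw
    rcases eq_or_ne w 0 with rfl | hw0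
    · exact Or.inl rfl
    right
    have hnorm : 0 < ‖w‖ := norm_pos_iff.mpr hw0
    have hlt : ‖w‖ < 1/2 := mem_ball_zero_iff.mp hw
    have hex : ∃ k : ℕ, (1/2:ℝ)^k < ‖w‖ := exists_pow_lt_of_lt_one hnorm (by norm_num)
    have hk0spec : (1/2:ℝ)^(Nat.find hex) < ‖w‖ := Nat.find_spec hex
    have hk02 : 2 ≤ Nat.find hex := by
      rw [Nat.le_find_iff]
      intro m hm
      interval_cases m <;> simp <;> linarith
    refine Set.mem_iUnion.mpr ⟨Nat.find hex - 2, ?_⟩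
    have he1 : Nat.find hex - 2 + 1 = Nat.find hex - 1 := by omega
    have he2 : Nat.find hex - 2 + 2 = Nat.find hex := by omega
    constructor
    · rw [mem_closedBall_zero_iff, he1]
      have := Nat.find_min hex (show Nat.find hex - 1 < Nat.find hex by omega)
      push_neg at this
      exact this
    · simp only [mem_ball_zero_iff, not_lt]
      rw [he2]
      exact hk0spec.le
  -- per-shell upper bound
  have hkey : ∀ k, (r (k+1))^j * (r (k+1))^d
      = (4:ℝ)^(d+j) * ((r (k+3))^(d+j-1) * r (k+3)) := by
    intro k
    have h1 : r (k+1) = 4 * r (k+3) := by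
      show (1/2:ℝ)^(k+1) = 4 * (1/2:ℝ)^(k+3)
      rw [show k+3 = (k+1)+2 from rfl, pow_add]; ring
    have h2 : d + j - 1 + 1 = d + j := by omega
    calc (r (k+1))^j * (r (k+1))^d = (r (k+1))^(d+j) := by rw [pow_add]; ring
      _ = (4 * r (k+3))^(d+j) := by rw [h1]
      _ = (4:ℝ)^(d+j) * (r (k+3))^(d+j) := mul_pow _ _ _
      _ = (4:ℝ)^(d+j) * ((r (k+3))^(d+j-1) * r (k+3)) := by
          have h3 : (r (k+3))^(d+j) = (r (k+3))^(d+j-1) * r (k+3) := by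
            rw [← pow_succ, h2]
          rw [h3]
  have hpershell : ∀ k, (∫⁻ w in S k, ENNReal.ofReal (‖w‖ ^ j) * f ‖w‖)
      ≤ volume (ball (0 : Euc d) 1) * ENNReal.ofReal ((4:ℝ)^(d+j)) *
        (ENNReal.ofReal ((r (k+3))^(d+j-1) * r (k+3)) * f (r (k+2))) := by
    intro k
    have hpt : ∀ w ∈ S k, ENNReal.ofReal (‖w‖ ^ j) * f ‖w‖
        ≤ ENNReal.ofReal ((r (k+1))^j) * f (r (k+2)) := by
      intro w hw
      obtain ⟨hw1, hw2⟩ := hSnorm k w hw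
      refine mul_le_mul' (ENNReal.ofReal_le_ofReal (pow_le_pow_left₀ (norm_nonneg _) hw2 j)) ?_
      refine hmono _ _ (hrpos _) hw1 ?_
      calc ‖w‖ ≤ r (k+1) := hw2
        _ ≤ 1/2 := hrhalf k
        _ < 1 := by norm_num
    calc (∫⁻ w in S k, ENNReal.ofReal (‖w‖ ^ j) * f ‖w‖)
        ≤ ∫⁻ _ in S k, ENNReal.ofReal ((r (k+1))^j) * f (r (k+2)) :=
          setLIntegral_mono' (hSmeas k) hpt
      _ = ENNReal.ofReal ((r (k+1))^j) * f (r (k+2)) * volume (S k) := setLIntegral_const _ _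
      _ ≤ ENNReal.ofReal ((r (k+1))^j) * f (r (k+2)) *
            volume (closedBall (0 : Euc d) (r (k+1))) := by
          gcongr
          exact Set.diff_subset
      _ = ENNReal.ofReal ((r (k+1))^j) * f (r (k+2)) *
            (ENNReal.ofReal ((r (k+1))^d) * volume (ball (0 : Euc d) 1)) := by
          rw [Measure.addHaar_closedBall_eq_addHaar_ball,
            Measure.addHaar_ball _ _ (hrpos (k+1)).le, finrank_euclideanSpace_fin]
      _ = volume (ball (0 : Euc d) 1) *
            (ENNReal.ofReal ((r (k+1))^j * (r (k+1))^d) * f (r (k+2))) := by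
          rw [ENNReal.ofReal_mul (by positivity)]
          ring
      _ = volume (ball (0 : Euc d) 1) * ENNReal.ofReal ((4:ℝ)^(d+j)) *
            (ENNReal.ofReal ((r (k+3))^(d+j-1) * r (k+3)) * f (r (k+2))) := by
          rw [hkey k, ENNReal.ofReal_mul (by positivity)]
          ring
  -- per-interval lower bound
  have hT : ∀ k, ENNReal.ofReal ((r (k+3))^(d+j-1) * r (k+3)) * f (r (k+2))
      ≤ ∫⁻ t in Set.Ioo (r (k+3)) (r (k+2)), ENNReal.ofReal (t ^ (d + j - 1)) * f t := by
    intro k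
    have hpt : ∀ t ∈ Set.Ioo (r (k+3)) (r (k+2)),
        ENNReal.ofReal ((r (k+3))^(d+j-1)) * f (r (k+2))
          ≤ ENNReal.ofReal (t ^ (d + j - 1)) * f t := by
      intro t ht
      refine mul_le_mul' (ENNReal.ofReal_le_ofReal
        (pow_le_pow_left₀ (hrpos _).le ht.1.le _)) ?_
      refine hmono _ _ ((hrpos _).trans ht.1) ht.2.le ?_
      calc r (k+2) ≤ 1/2 := by
            have := hrmono (show 1 ≤ k+2 by omega)
            simpa [hr] using this
        _ < 1 := by norm_num
    have hvol : volume (Set.Ioo (r (k+3)) (r (k+2))) = ENNReal.ofReal (r (k+3)) := by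
      rw [Real.volume_Ioo]
      congr 1
      have := hrdouble (k+1)
      rw [show k+3 = (k+1)+2 from rfl, show k+2 = (k+1)+1 from rfl]
      linarith
    calc ENNReal.ofReal ((r (k+3))^(d+j-1) * r (k+3)) * f (r (k+2))
        = ENNReal.ofReal ((r (k+3))^(d+j-1)) * f (r (k+2)) * ENNReal.ofReal (r (k+3)) := by
          rw [ENNReal.ofReal_mul (by positivity)]
          ring
      _ = ENNReal.ofReal ((r (k+3))^(d+j-1)) * f (r (k+2)) *
            volume (Set.Ioo (r (k+3)) (r (k+2))) := by rw [hvol]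
      _ = ∫⁻ _ in Set.Ioo (r (k+3)) (r (k+2)),
            ENNReal.ofReal ((r (k+3))^(d+j-1)) * f (r (k+2)) := (setLIntegral_const _ _).symm
      _ ≤ ∫⁻ t in Set.Ioo (r (k+3)) (r (k+2)), ENNReal.ofReal (t ^ (d + j - 1)) * f t :=
          setLIntegral_mono ((ENNReal.measurable_ofReal.comp
            (measurable_id.pow_const _)).mul hf) hpt
  -- disjointness
  have hdisjaux : ∀ {k l : ℕ}, k < l →
      Disjoint (Set.Ioo (r (k+3)) (r (k+2))) (Set.Ioo (r (l+3)) (r (l+2))) := by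
    intro k l h
    apply Set.disjoint_left.mpr
    rintro t ⟨h1k, h2k⟩ ⟨h1l, h2l⟩
    have : r (l+2) ≤ r (k+3) := hrmono (by omega)
    linarith
  have hdisj : Pairwise (Function.onFun Disjoint fun k => Set.Ioo (r (k+3)) (r (k+2))) := by
    intro k l hkl
    rcases lt_or_gt_of_ne hkl with h | h
    · exact hdisjaux h
    · exact (hdisjaux h).symm
  have hsub : (⋃ k : ℕ, Set.Ioo (r (k+3)) (r (k+2))) ⊆ Set.Ioo (0:ℝ) 1 := by
    refine Set.iUnion_subset fun k => ?_
    rintro t ⟨h1, h2⟩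
    refine ⟨(hrpos _).trans h1, ?_⟩
    calc t < r (k+2) := h2
      _ ≤ 1/2 := hrhalf (k+1)
      _ < 1 := by norm_num
  -- put it together
  calc (∫⁻ w in ball (0 : Euc d) (1/2), ENNReal.ofReal (‖w‖ ^ j) * f ‖w‖)
      ≤ ∫⁻ w in {0} ∪ ⋃ k : ℕ, S k, ENNReal.ofReal (‖w‖ ^ j) * f ‖w‖ :=
        lintegral_mono_set hcover
    _ ≤ (∫⁻ w in ({0} : Set (Euc d)), ENNReal.ofReal (‖w‖ ^ j) * f ‖w‖)
          + ∫⁻ w in ⋃ k : ℕ, S k, ENNReal.ofReal (‖w‖ ^ j) * f ‖w‖ :=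
        lintegral_union_le _ _ _
    _ = ∫⁻ w in ⋃ k : ℕ, S k, ENNReal.ofReal (‖w‖ ^ j) * f ‖w‖ := by
        rw [setLIntegral_measure_zero _ _ (euc_vol_singleton hd), zero_add]
    _ ≤ ∑' k : ℕ, ∫⁻ w in S k, ENNReal.ofReal (‖w‖ ^ j) * f ‖w‖ :=
        lintegral_iUnion_le _ _
    _ ≤ ∑' k : ℕ, volume (ball (0 : Euc d) 1) * ENNReal.ofReal ((4:ℝ)^(d+j)) *
          (ENNReal.ofReal ((r (k+3))^(d+j-1) * r (k+3)) * f (r (k+2))) :=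
        ENNReal.tsum_le_tsum hpershell
    _ ≤ ∑' k : ℕ, volume (ball (0 : Euc d) 1) * ENNReal.ofReal ((4:ℝ)^(d+j)) *
          ∫⁻ t in Set.Ioo (r (k+3)) (r (k+2)), ENNReal.ofReal (t ^ (d + j - 1)) * f t :=
        ENNReal.tsum_le_tsum fun k => mul_le_mul_right (hT k) _
    _ = volume (ball (0 : Euc d) 1) * ENNReal.ofReal ((4:ℝ)^(d+j)) *
          ∑' k : ℕ, ∫⁻ t in Set.Ioo (r (k+3)) (r (k+2)),
            ENNReal.ofReal (t ^ (d + j - 1)) * f t := ENNReal.tsum_mul_left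
    _ = volume (ball (0 : Euc d) 1) * ENNReal.ofReal ((4:ℝ)^(d+j)) *
          ∫⁻ t in ⋃ k : ℕ, Set.Ioo (r (k+3)) (r (k+2)),
            ENNReal.ofReal (t ^ (d + j - 1)) * f t := by
        rw [lintegral_iUnion (fun k => measurableSet_Ioo) hdisj]
    _ ≤ volume (ball (0 : Euc d) 1) * ENNReal.ofReal ((4:ℝ)^(d+j)) *
          ∫⁻ t in Set.Ioo (0:ℝ) 1, ENNReal.ofReal (t ^ (d + j - 1)) * f t :=
        mul_le_mul_right (lintegral_mono_set hsub) _

/-- `gb c * c ^ d ≤ 2 d ∫_0^1 gb t t^(d-1) dt`. -/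
lemma kernel_pow_bound (gb : ℝ → ℝ) (hpos : ∀ t : ℝ, 0 < t → 0 < gb t)
    (hdec : AntitoneOn gb (Set.Ioi (0 : ℝ))) {d : ℕ} (hd : 1 ≤ d)
    (hadm : IntegrableOn (fun t : ℝ => gb t * t ^ (d - 1)) (Set.Ioo (0 : ℝ) 1))
    {c : ℝ} (hc : 0 < c) (hc2 : c ≤ 1/2) :
    gb c * c ^ d ≤ 2 * d * ∫ t in Set.Ioo (0:ℝ) 1, gb t * t ^ (d-1) := by
  have hsub : Set.Ioo (c/2) c ⊆ Set.Ioo (0:ℝ) 1 := by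
    rintro t ⟨h1, h2⟩
    exact ⟨by linarith, by linarith⟩
  have h1 : IntegrableOn (fun t : ℝ => gb t * t ^ (d-1)) (Set.Ioo (c/2) c) :=
    hadm.mono_set hsub
  have h2 : IntegrableOn (fun t : ℝ => gb c * t ^ (d-1)) (Set.Ioo (c/2) c) :=
    ((continuous_const.mul (continuous_pow (d-1))).integrableOn_Icc
      (a := c/2) (b := c)).mono_set Set.Ioo_subset_Icc_self
  have hmono : (∫ t in Set.Ioo (c/2) c, gb c * t ^ (d-1))
      ≤ ∫ t in Set.Ioo (c/2) c, gb t * t ^ (d-1) := by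
    refine setIntegral_mono_on h2 h1 measurableSet_Ioo ?_
    intro t ht
    have htpos : 0 < t := by rcases ht with ⟨h, _⟩; linarith
    have : gb c ≤ gb t :=
      hdec (Set.mem_Ioi.mpr htpos) (Set.mem_Ioi.mpr hc) ht.2.le
    exact mul_le_mul_of_nonneg_right this (pow_nonneg htpos.le _)
  have hval : (∫ t in Set.Ioo (c/2) c, gb c * t ^ (d-1))
      = gb c * ((c^d - (c/2)^d) / d) := by
    rw [MeasureTheory.integral_const_mul]
    congr 1
    rw [← MeasureTheory.integral_Ioc_eq_integral_Ioo,
      ← intervalIntegral.integral_of_le (by linarith : c/2 ≤ c)]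
    rw [integral_pow, Nat.sub_add_cancel hd]
    congr 1
    exact_mod_cast Nat.sub_add_cancel hd
  have hM : (∫ t in Set.Ioo (c/2) c, gb t * t ^ (d-1))
      ≤ ∫ t in Set.Ioo (0:ℝ) 1, gb t * t ^ (d-1) := by
    refine setIntegral_mono_set hadm ?_ (HasSubset.Subset.eventuallyLE hsub)
    filter_upwards [ae_restrict_mem measurableSet_Ioo] with t ht
    exact mul_nonneg (hpos t ht.1).le (pow_nonneg ht.1.le _)
  have hd0 : (0:ℝ) < (d:ℝ) := by exact_mod_cast Nat.lt_of_lt_of_le Nat.zero_lt_one hd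
  have h2d : (2:ℝ) ≤ 2^d := by
    calc (2:ℝ) = 2^1 := (pow_one 2).symm
      _ ≤ 2^d := pow_le_pow_right₀ (by norm_num) hd
  have hgc' : (0:ℝ) ≤ gb c := (hpos c hc).le
  have hcd : (0:ℝ) ≤ c^d := pow_nonneg hc.le d
  have hhalf : (c/2)^d ≤ c^d / 2 := by
    rw [div_pow]
    gcongr
  have hfinal : gb c * (c^d/2/(d:ℝ)) ≤ ∫ t in Set.Ioo (0:ℝ) 1, gb t * t^(d-1) := by
    calc gb c * (c^d/2/(d:ℝ)) ≤ gb c * ((c^d - (c/2)^d)/(d:ℝ)) := by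
          gcongr
          linarith
      _ = ∫ t in Set.Ioo (c/2) c, gb c * t ^ (d-1) := hval.symm
      _ ≤ ∫ t in Set.Ioo (c/2) c, gb t * t ^ (d-1) := hmono
      _ ≤ ∫ t in Set.Ioo (0:ℝ) 1, gb t * t ^ (d-1) := hM
  have hmul := mul_le_mul_of_nonneg_right hfinal (show (0:ℝ) ≤ 2*(d:ℝ) by positivity)
  have heq : gb c * (c^d/2/(d:ℝ)) * (2*(d:ℝ)) = gb c * c^d := by
    field_simp
  rw [heq] at hmul
  linarith

lemma pi_vol_singleton {d : ℕ} (hd : 0 < d) : volume ({0} : Set (Fin d → ℝ)) = 0 := by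
  have h0 : ({0} : Set (Fin d → ℝ)) = Set.pi Set.univ (fun _ => ({0} : Set ℝ)) := by
    rw [Set.univ_pi_singleton]; rfl
  rw [h0, volume_pi_pi]
  exact Finset.prod_eq_zero (Finset.mem_univ (⟨0, hd⟩ : Fin d)) Real.volume_singleton

end AnnuliAux

/-- There is a constant `C = C(N,g)` such that for every `0 < σ ≤ 1/4`,
`|∫_{A(σ) ∩ B(0,2σ)} g(w) dw − ∫_{A(−σ) ∩ B(0,2σ)} g(w) dw| ≤ C σ`,
where `A(σ) = B(−e₁,1+σ) \ B(−e₁,1)` and `A(−σ) = B(−e₁,1) \ B(−e₁,1−σ)`. -/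
theorem annuli_near_origin_estimate {N : ℕ} (hN : 2 ≤ N) (gb : ℝ → ℝ)
    (hpos : ∀ t : ℝ, 0 < t → 0 < gb t)
    (hdec : AntitoneOn gb (Set.Ioi (0 : ℝ)))
    (hadm : IntegrableOn (fun t : ℝ => gb t * t ^ (N - 1)) (Set.Ioo (0 : ℝ) 1)) :
    ∃ C : ℝ, ∀ σ : ℝ, 0 < σ → σ ≤ 1 / 4 →
      |(∫ w in (ball (-e1 N) (1 + σ) \ ball (-e1 N) 1) ∩ ball (0 : Euc N) (2 * σ),
          gb ‖w‖) -
        (∫ w in (ball (-e1 N) 1 \ ball (-e1 N) (1 - σ)) ∩ ball (0 : Euc N) (2 * σ),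
          gb ‖w‖)| ≤ C * σ := by
  obtain ⟨n, rfl⟩ : ∃ n, N = n + 1 := ⟨N - 1, by omega⟩
  have hn : 1 ≤ n := by omega
  have hadm' : IntegrableOn (fun t : ℝ => gb t * t ^ n) (Set.Ioo (0:ℝ) 1) := by
    simpa using hadm
  set q : ℝ → ℝ := AnnuliAux.qfun gb with hq
  have hqm : Measurable q := AnnuliAux.qfun_measurable gb hdec
  set M : ℝ := ∫ t in Set.Ioo (0:ℝ) 1, gb t * t ^ n with hMdef
  have hM0 : 0 ≤ M := setIntegral_nonneg measurableSet_Ioo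
    (fun t ht => mul_nonneg (hpos t ht.1).le (pow_nonneg ht.1.le n))
  set Ml : ℝ≥0∞ := ∫⁻ t in Set.Ioo (0:ℝ) 1, ENNReal.ofReal (gb t * t ^ n) with hMldef
  have hMlfin : Ml ≠ ⊤ := by
    have h := hadm'.2
    rw [HasFiniteIntegral] at h
    refine ne_of_lt (lt_of_le_of_lt ?_ h)
    exact lintegral_mono fun t => Real.ofReal_le_enorm _
  -- measurability of the truncated kernel
  have hfm : Measurable (fun t : ℝ => ENNReal.ofReal (q t)) :=
    ENNReal.measurable_ofReal.comp hqm
  have hfmono : ∀ s t : ℝ, 0 < s → s ≤ t → t < 1 →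
      ENNReal.ofReal (q t) ≤ ENNReal.ofReal (q s) := by
    intro s t hs hst ht1
    apply ENNReal.ofReal_le_ofReal
    rw [hq, AnnuliAux.qfun_of_mem gb ⟨lt_of_lt_of_le hs hst, ht1⟩,
      AnnuliAux.qfun_of_mem gb ⟨hs, lt_of_le_of_lt hst ht1⟩]
    exact hdec (Set.mem_Ioi.mpr hs) (Set.mem_Ioi.mpr (lt_of_lt_of_le hs hst)) hst
  -- the K' constant
  set Kp : ℝ≥0∞ := ∫⁻ z in ball (0 : Euc n) (1/2), ENNReal.ofReal (‖z‖ * q ‖z‖) with hKpdef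
  have hKple : Kp ≤ volume (ball (0 : Euc n) 1) * ENNReal.ofReal ((4:ℝ)^(n+1)) * Ml := by
    have hsh := AnnuliAux.shell_bound (d := n) (by omega) 1
      (fun t => ENNReal.ofReal (q t)) hfm hfmono
    have hlhs : (∫⁻ z in ball (0 : Euc n) (1/2), ENNReal.ofReal (‖z‖ * q ‖z‖))
        = ∫⁻ z in ball (0 : Euc n) (1/2),
            ENNReal.ofReal (‖z‖ ^ 1) * ENNReal.ofReal (q ‖z‖) := by
      refine setLIntegral_congr_fun_ae measurableSet_ball (ae_of_all _ (fun z _ => ?_))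
      rw [pow_one, ← ENNReal.ofReal_mul (norm_nonneg z)]
    have hrhs : (∫⁻ t in Set.Ioo (0:ℝ) 1,
          ENNReal.ofReal (t ^ (n + 1 - 1)) * ENNReal.ofReal (q t)) = Ml := by
      rw [hMldef]
      refine setLIntegral_congr_fun_ae measurableSet_Ioo (ae_of_all _ (fun t ht => ?_))
      rw [Nat.add_sub_cancel, hq, AnnuliAux.qfun_of_mem gb ht,
        ← ENNReal.ofReal_mul (pow_nonneg ht.1.le n), mul_comm]
    rw [hKpdef, hlhs, ← hrhs]
    exact hsh
  have hvolb : volume (ball (0 : Euc n) 1) ≠ ⊤ := measure_ball_lt_top.ne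
  have hKpfin : Kp ≠ ⊤ :=
    ne_top_of_le_ne_top (ENNReal.mul_ne_top
      (ENNReal.mul_ne_top hvolb ENNReal.ofReal_ne_top) hMlfin) hKple
  -- the global finiteness bound
  set T : ℝ≥0∞ := ∫⁻ w in ball (0 : Euc (n+1)) (1/2), ENNReal.ofReal (q ‖w‖) with hTdef
  have hTfin : T ≠ ⊤ := by
    have hsh := AnnuliAux.shell_bound (d := n+1) (by omega) 0
      (fun t => ENNReal.ofReal (q t)) hfm hfmono
    have hlhs : (∫⁻ w in ball (0 : Euc (n+1)) (1/2), ENNReal.ofReal (q ‖w‖))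
        = ∫⁻ w in ball (0 : Euc (n+1)) (1/2),
            ENNReal.ofReal (‖w‖ ^ 0) * ENNReal.ofReal (q ‖w‖) := by
      refine setLIntegral_congr_fun_ae measurableSet_ball (ae_of_all _ (fun w _ => ?_))
      rw [pow_zero, ENNReal.ofReal_one, one_mul]
    have hrhs : (∫⁻ t in Set.Ioo (0:ℝ) 1,
          ENNReal.ofReal (t ^ (n + 1 + 0 - 1)) * ENNReal.ofReal (q t)) = Ml := by
      rw [hMldef]
      refine setLIntegral_congr_fun_ae measurableSet_Ioo (ae_of_all _ (fun t ht => ?_))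
      rw [show n + 1 + 0 - 1 = n by omega, hq, AnnuliAux.qfun_of_mem gb ht,
        ← ENNReal.ofReal_mul (pow_nonneg ht.1.le n), mul_comm]
    rw [hTdef, hlhs]
    refine ne_of_lt (lt_of_le_of_lt hsh ?_)
    rw [hrhs]
    exact ENNReal.mul_lt_top
      (ENNReal.mul_ne_top measure_ball_lt_top.ne ENNReal.ofReal_ne_top).lt_top
      hMlfin.lt_top
  -- coordinates
  set Φ : ℝ × (Fin n → ℝ) → Euc (n+1) := fun p =>
    ((MeasurableEquiv.toLp 2 (Fin (n+1) → ℝ)).symm).symm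
      ((MeasurableEquiv.piFinSuccAbove (fun _ : Fin (n+1) => ℝ) 0).symm p) with hΦdef
  have mpΦ : MeasurePreserving Φ
      ((volume : Measure ℝ).prod (volume : Measure (Fin n → ℝ)))
      (volume : Measure (Euc (n+1))) :=
    ((EuclideanSpace.volume_preserving_symm_measurableEquiv_toLp (Fin (n+1))).symm _).comp
      ((volume_preserving_piFinSuccAbove (fun _ : Fin (n+1) => ℝ) 0).symm _)
  have hΦm : Measurable Φ :=
    (((MeasurableEquiv.toLp 2 (Fin (n+1) → ℝ)).symm).symm.measurable).comp
      (MeasurableEquiv.piFinSuccAbove (fun _ : Fin (n+1) => ℝ) 0).symm.measurable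
  have hΦc0 : ∀ (t : ℝ) (y : Fin n → ℝ), Φ (t, y) 0 = t := by
    intro t y
    rw [hΦdef]
    simp [MeasurableEquiv.symm_symm, MeasurableEquiv.coe_toLp, MeasurableEquiv.piFinSuccAbove_symm_apply,
      PiLp.toLp_apply, Fin.insertNth_zero']
  have hΦcs : ∀ (t : ℝ) (y : Fin n → ℝ) (j : Fin n), Φ (t, y) j.succ = y j := by
    intro t y j
    rw [hΦdef]
    simp [MeasurableEquiv.symm_symm, MeasurableEquiv.coe_toLp, MeasurableEquiv.piFinSuccAbove_symm_apply,
      PiLp.toLp_apply, Fin.insertNth_zero']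
  set Sy : (Fin n → ℝ) → ℝ := fun y => ∑ j, (y j)^2 with hSydef
  have hSy0 : ∀ y, 0 ≤ Sy y := fun y => Finset.sum_nonneg fun j _ => sq_nonneg _
  have hSym : Measurable Sy := by
    apply Finset.measurable_sum
    intro j _
    exact (measurable_pi_apply j).pow_const 2
  have hwnorm : ∀ (t : ℝ) (y : Fin n → ℝ), ‖Φ (t, y)‖^2 = t^2 + Sy y := by
    intro t y
    rw [AnnuliAux.euc_norm_sq, Fin.sum_univ_succ, hΦc0 t y]
    have hs : ∑ j : Fin n, (Φ (t, y) j.succ)^2 = Sy y := by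
      show ∑ j : Fin n, (Φ (t, y) j.succ)^2 = ∑ j : Fin n, (y j)^2
      exact Finset.sum_congr rfl fun j _ => by rw [hΦcs t y j]
    rw [hs]
  have he1c : ∀ i : Fin (n+1), (e1 (n+1)) i = if i = 0 then (1:ℝ) else 0 := by
    intro i
    rw [e1, dif_pos (Nat.succ_pos n), EuclideanSpace.single_apply]
    norm_num [Fin.mk_zero]
    split_ifs <;> simp_all
  have hwe : ∀ (t : ℝ) (y : Fin n → ℝ), ‖Φ (t, y) + e1 (n+1)‖^2 = (1+t)^2 + Sy y := by
    intro t y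
    rw [AnnuliAux.euc_norm_sq, Fin.sum_univ_succ]
    have h0 : (Φ (t, y) + e1 (n+1)) 0 = t + 1 := by
      rw [PiLp.add_apply, hΦc0 t y, he1c 0, if_pos rfl]
    have hsc : ∀ j : Fin n, (Φ (t, y) + e1 (n+1)) j.succ = y j := by
      intro j
      rw [PiLp.add_apply, hΦcs t y j, he1c j.succ, if_neg (Fin.succ_ne_zero j), add_zero]
    rw [h0, hSydef]
    have : ∑ j : Fin n, ((Φ (t, y) + e1 (n+1)) j.succ)^2 = ∑ j : Fin n, (y j)^2 :=
      Finset.sum_congr rfl fun j _ => by rw [hsc j]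
    rw [this]
    ring_nf
  -- the constant
  set C2 : ℝ := 9 * 4^n * (2^(n+1) * (2*(n+1) * M)) with hC2def
  have hC2nn : 0 ≤ C2 := by
    rw [hC2def]
    apply mul_nonneg (by positivity)
    apply mul_nonneg (by positivity)
    apply mul_nonneg (by positivity) hM0
  have hKnn : 0 ≤ Kp.toReal := ENNReal.toReal_nonneg
  refine ⟨4 * Kp.toReal + C2, ?_⟩
  intro σ hσ hσ4
  set X : ℝ := 4 * Kp.toReal + C2 with hXdef
  have hXnn : 0 ≤ X := by rw [hXdef]; linarith
  -- the regions
  set Sp : Set (Euc (n+1)) :=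
    (ball (-e1 (n+1)) (1 + σ) \ ball (-e1 (n+1)) 1) ∩ ball (0 : Euc (n+1)) (2*σ) with hSpdef
  set Sm : Set (Euc (n+1)) :=
    (ball (-e1 (n+1)) 1 \ ball (-e1 (n+1)) (1-σ)) ∩ ball (0 : Euc (n+1)) (2*σ) with hSmdef
  have hSpmeas : MeasurableSet Sp :=
    ((measurableSet_ball.diff measurableSet_ball).inter measurableSet_ball)
  have hSmmeas : MeasurableSet Sm :=
    ((measurableSet_ball.diff measurableSet_ball).inter measurableSet_ball)
  have hmemP : ∀ w : Euc (n+1), (w ∈ Sp ↔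
      (1 ≤ ‖w + e1 (n+1)‖^2 ∧ ‖w + e1 (n+1)‖^2 < (1+σ)^2 ∧ ‖w‖^2 < (2*σ)^2)) := by
    intro w
    rw [hSpdef]
    simp only [Set.mem_inter_iff, Set.mem_diff, mem_ball, dist_eq_norm, sub_neg_eq_add,
      sub_zero, dist_zero_right, mem_ball_zero_iff]
    constructor
    · rintro ⟨⟨h1, h2⟩, h3⟩
      rw [not_lt] at h2
      exact ⟨(AnnuliAux.one_le_iff_sq (norm_nonneg _)).mp h2,
        (AnnuliAux.sq_lt_iff' (norm_nonneg _) (by linarith)).mp h1,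
        (AnnuliAux.sq_lt_iff' (norm_nonneg _) (by linarith)).mp h3⟩
    · rintro ⟨h1, h2, h3⟩
      exact ⟨⟨(AnnuliAux.sq_lt_iff' (norm_nonneg _) (by linarith)).mpr h2,
        not_lt.mpr ((AnnuliAux.one_le_iff_sq (norm_nonneg _)).mpr h1)⟩,
        (AnnuliAux.sq_lt_iff' (norm_nonneg _) (by linarith)).mpr h3⟩
  have hmemM : ∀ w : Euc (n+1), (w ∈ Sm ↔
      ((1-σ)^2 ≤ ‖w + e1 (n+1)‖^2 ∧ ‖w + e1 (n+1)‖^2 < 1 ∧ ‖w‖^2 < (2*σ)^2)) := by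
    intro w
    rw [hSmdef]
    simp only [Set.mem_inter_iff, Set.mem_diff, mem_ball, dist_eq_norm, sub_neg_eq_add,
      sub_zero, dist_zero_right, mem_ball_zero_iff]
    constructor
    · rintro ⟨⟨h1, h2⟩, h3⟩
      rw [not_lt] at h2
      refine ⟨(AnnuliAux.sq_le_iff' (by linarith) (norm_nonneg _)).mp h2, ?_, ?_⟩
      · have := (AnnuliAux.sq_lt_iff' (norm_nonneg (w + e1 (n+1))) (by norm_num : (0:ℝ) ≤ 1)).mp h1
        simpa using this
      · exact (AnnuliAux.sq_lt_iff' (norm_nonneg _) (by linarith)).mp h3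
    · rintro ⟨h1, h2, h3⟩
      refine ⟨⟨?_, not_lt.mpr ((AnnuliAux.sq_le_iff' (by linarith) (norm_nonneg _)).mpr h1)⟩,
        (AnnuliAux.sq_lt_iff' (norm_nonneg _) (by linarith)).mpr h3⟩
      have : ‖w + e1 (n+1)‖^2 < (1:ℝ)^2 := by simpa using h2
      exact (AnnuliAux.sq_lt_iff' (norm_nonneg _) (by norm_num : (0:ℝ) ≤ 1)).mpr this
  -- the lintegral versions
  set A : ℝ≥0∞ := ∫⁻ w in Sp, ENNReal.ofReal (q ‖w‖) with hAdef
  set B : ℝ≥0∞ := ∫⁻ w in Sm, ENNReal.ofReal (q ‖w‖) with hBdef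
  have hsub2σ : ball (0 : Euc (n+1)) (2*σ) ⊆ ball (0 : Euc (n+1)) (1/2) :=
    ball_subset_ball (by linarith)
  have hAfin : A ≠ ⊤ := by
    refine ne_top_of_le_ne_top hTfin ?_
    rw [hAdef, hTdef]
    exact lintegral_mono_set (Set.inter_subset_right.trans hsub2σ)
  have hBfin : B ≠ ⊤ := by
    refine ne_top_of_le_ne_top hTfin ?_
    rw [hBdef, hTdef]
    exact lintegral_mono_set (Set.inter_subset_right.trans hsub2σ)
  -- bridge between Bochner and lower integrals
  have hae0 : ∀ᵐ w : Euc (n+1), w ≠ (0 : Euc (n+1)) := by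
    rw [ae_iff]
    have : {w : Euc (n+1) | ¬ w ≠ 0} = {(0 : Euc (n+1))} := by
      ext w; simp
    rw [this]
    exact AnnuliAux.euc_vol_singleton (by omega)
  have hbridge : ∀ s : Set (Euc (n+1)), MeasurableSet s → s ⊆ ball (0 : Euc (n+1)) (2*σ) →
      (∫ w in s, gb ‖w‖) = (∫⁻ w in s, ENNReal.ofReal (q ‖w‖)).toReal := by
    intro s hs hsub
    have h1 : (∫ w in s, gb ‖w‖) = ∫ w in s, q ‖w‖ := by
      refine setIntegral_congr_ae hs ?_
      filter_upwards [hae0] with w hw hmem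
      have h2 : ‖w‖ ∈ Set.Ioo (0:ℝ) 1 :=
        ⟨norm_pos_iff.mpr hw, lt_of_lt_of_le (mem_ball_zero_iff.mp (hsub hmem)) (by linarith)⟩
      rw [hq, AnnuliAux.qfun_of_mem gb h2]
    have hmq : Measurable fun w : Euc (n+1) => q ‖w‖ := hqm.comp measurable_norm
    rw [h1, integral_eq_lintegral_of_nonneg_ae
      (ae_of_all _ (fun w => by rw [hq]; exact AnnuliAux.qfun_nonneg gb hpos ‖w‖))
      hmq.aestronglyMeasurable]
  -- Fubini
  have hFw : Measurable fun w : Euc (n+1) => ENNReal.ofReal (q ‖w‖) :=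
    hfm.comp measurable_norm
  have hfub : ∀ s : Set (Euc (n+1)), MeasurableSet s →
      (∫⁻ w in s, ENNReal.ofReal (q ‖w‖)) =
        ∫⁻ y : Fin n → ℝ, ∫⁻ t : ℝ,
          (s.indicator (fun w => ENNReal.ofReal (q ‖w‖)) (Φ (t, y))) := by
    intro s hs
    rw [← lintegral_indicator hs]
    rw [← mpΦ.lintegral_comp (hFw.indicator hs)]
    exact lintegral_prod_symm _ (((hFw.indicator hs).comp hΦm)).aemeasurable
  -- inner integral reduction
  have hnormval : ∀ (t : ℝ) (y : Fin n → ℝ),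
      ‖Φ (t, y)‖ = Real.sqrt (t^2 + Sy y) := by
    intro t y
    rw [← hwnorm t y, Real.sqrt_sq (norm_nonneg _)]
  have hinnerP : ∀ y : Fin n → ℝ,
      (∫⁻ t : ℝ, (Sp.indicator (fun w => ENNReal.ofReal (q ‖w‖)) (Φ (t, y))))
        = ∫⁻ t in Set.Ico (Real.sqrt (1 - Sy y) - 1)
              (Real.sqrt ((1+σ)^2 - Sy y) - 1) ∩
            Set.Ioo (-Real.sqrt ((2*σ)^2 - Sy y))
              (Real.sqrt ((2*σ)^2 - Sy y)),
            ENNReal.ofReal (q (Real.sqrt (t^2 + Sy y))) := by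
    intro y
    rw [← lintegral_indicator ((measurableSet_Ico.inter measurableSet_Ioo))]
    refine lintegral_congr fun t => ?_

    have hiff : Φ (t, y) ∈ Sp ↔
        t ∈ Set.Ico (Real.sqrt (1 - Sy y) - 1)
              (Real.sqrt ((1+σ)^2 - Sy y) - 1) ∩
            Set.Ioo (-Real.sqrt ((2*σ)^2 - Sy y))
              (Real.sqrt ((2*σ)^2 - Sy y)) := by
      have hslice := AnnuliAux.slice_mem_plus (ρ := Real.sqrt (Sy y)) hσ hσ4
        (Real.sqrt_nonneg _) t
      rw [Real.sq_sqrt (hSy0 y)] at hslice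
      rw [hmemP (Φ (t, y)), hwe t y, hwnorm t y, Set.mem_inter_iff]
      exact hslice
    by_cases hmem : Φ (t, y) ∈ Sp
    · rw [Set.indicator_of_mem hmem, Set.indicator_of_mem (hiff.mp hmem), hnormval t y]
    · rw [Set.indicator_of_notMem hmem, Set.indicator_of_notMem (fun hc => hmem (hiff.mpr hc))]
  have hinnerM : ∀ y : Fin n → ℝ,
      (∫⁻ t : ℝ, (Sm.indicator (fun w => ENNReal.ofReal (q ‖w‖)) (Φ (t, y))))
        = ∫⁻ t in Set.Ico (Real.sqrt ((1-σ)^2 - Sy y) - 1)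
              (Real.sqrt (1 - Sy y) - 1) ∩
            Set.Ioo (-Real.sqrt ((2*σ)^2 - Sy y))
              (Real.sqrt ((2*σ)^2 - Sy y)),
            ENNReal.ofReal (q (Real.sqrt (t^2 + Sy y))) := by
    intro y
    rw [← lintegral_indicator ((measurableSet_Ico.inter measurableSet_Ioo))]
    refine lintegral_congr fun t => ?_

    have hiff : Φ (t, y) ∈ Sm ↔
        t ∈ Set.Ico (Real.sqrt ((1-σ)^2 - Sy y) - 1)
              (Real.sqrt (1 - Sy y) - 1) ∩
            Set.Ioo (-Real.sqrt ((2*σ)^2 - Sy y))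
              (Real.sqrt ((2*σ)^2 - Sy y)) := by
      have hslice := AnnuliAux.slice_mem_minus (ρ := Real.sqrt (Sy y)) hσ hσ4
        (Real.sqrt_nonneg _) t
      rw [Real.sq_sqrt (hSy0 y)] at hslice
      rw [hmemM (Φ (t, y)), hwe t y, hwnorm t y, Set.mem_inter_iff]
      exact hslice
    by_cases hmem : Φ (t, y) ∈ Sm
    · rw [Set.indicator_of_mem hmem, Set.indicator_of_mem (hiff.mp hmem), hnormval t y]
    · rw [Set.indicator_of_notMem hmem, Set.indicator_of_notMem (fun hc => hmem (hiff.mpr hc))]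
  -- error functions
  set c1 : (Fin n → ℝ) → ℝ≥0∞ := fun y =>
    Set.indicator {y : Fin n → ℝ | Real.sqrt (Sy y) < 2*σ}
      (fun y => ENNReal.ofReal (4*σ*(Real.sqrt (Sy y) * q (Real.sqrt (Sy y))))) y with hc1def
  set c2 : (Fin n → ℝ) → ℝ≥0∞ := fun y =>
    Set.indicator {y : Fin n → ℝ | Real.sqrt (Sy y) < 2*σ}
      (fun _ => ENNReal.ofReal (9*σ^2*gb (σ/2))) y with hc2def
  have hsqrtm : Measurable fun y : Fin n → ℝ => Real.sqrt (Sy y) :=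
    Real.continuous_sqrt.measurable.comp hSym
  have hsetmeas : MeasurableSet {y : Fin n → ℝ | Real.sqrt (Sy y) < 2*σ} :=
    measurableSet_lt hsqrtm measurable_const
  have hc1m : Measurable c1 := by
    rw [hc1def]
    exact (ENNReal.measurable_ofReal.comp
      (measurable_const.mul (hsqrtm.mul (hqm.comp hsqrtm)))).indicator hsetmeas
  have hc2m : Measurable c2 := by
    rw [hc2def]
    exact measurable_const.indicator hsetmeas
  -- the per-slice comparison
  have haey : ∀ᵐ y : Fin n → ℝ, 0 < Sy y := by
    rw [ae_iff]
    refine measure_mono_null ?_ (AnnuliAux.pi_vol_singleton hn)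
    intro y hy
    simp only [Set.mem_setOf_eq, not_lt] at hy
    have h0 : Sy y = 0 := le_antisymm hy (hSy0 y)
    have : ∀ j, y j = 0 := by
      intro j
      have h1 : (y j)^2 ≤ Sy y :=
        Finset.single_le_sum (f := fun j => (y j)^2) (fun i _ => sq_nonneg _)
          (Finset.mem_univ j)
      nlinarith [sq_nonneg (y j)]
    exact Set.mem_singleton_iff.mpr (funext this)
  have hkey1 : ∀ᵐ y : Fin n → ℝ,
      (∫⁻ t : ℝ, (Sp.indicator (fun w => ENNReal.ofReal (q ‖w‖)) (Φ (t, y))))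
        ≤ (∫⁻ t : ℝ, (Sm.indicator (fun w => ENNReal.ofReal (q ‖w‖)) (Φ (t, y))))
          + (c1 y + c2 y) := by
    filter_upwards [haey] with y hy
    rw [hinnerP y, hinnerM y]
    have hρpos : 0 < Real.sqrt (Sy y) := Real.sqrt_pos.mpr hy
    rcases lt_or_ge (Real.sqrt (Sy y)) (2*σ) with hcase | hcase
    · have hse := (AnnuliAux.slice_est gb hpos hdec hσ hσ4 hρpos hcase).1
      rw [Real.sq_sqrt (hSy0 y)] at hse
      refine le_trans hse ?_
      rw [add_assoc]
      refine add_le_add_right (add_le_add ?_ ?_) _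
      · have hmem : y ∈ {y : Fin n → ℝ | Real.sqrt (Sy y) < 2*σ} := hcase
        rw [hc1def]
        simp only [Set.indicator_of_mem hmem]
        apply ENNReal.ofReal_le_ofReal
        rw [hq, AnnuliAux.qfun_of_mem gb ⟨hρpos, by linarith⟩]
        have hSg : Sy y * gb (Real.sqrt (Sy y))
            = (Real.sqrt (Sy y))^2 * gb (Real.sqrt (Sy y)) := by
          rw [Real.sq_sqrt (hSy0 y)]
        nlinarith [mul_nonneg (mul_nonneg
            (show (0:ℝ) ≤ 2*σ - Real.sqrt (Sy y) by linarith) (Real.sqrt_nonneg (Sy y)))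
            (hpos _ hρpos).le,
          hSg, (hpos _ hρpos).le, Real.sqrt_nonneg (Sy y)]
      · have hmem : y ∈ {y : Fin n → ℝ | Real.sqrt (Sy y) < 2*σ} := hcase
        rw [hc2def]
        simp only [Set.indicator_of_mem hmem]
        exact le_rfl
    · have hz : Real.sqrt ((2*σ)^2 - Sy y) = 0 := by
        apply Real.sqrt_eq_zero'.mpr
        nlinarith [Real.sq_sqrt (hSy0 y), Real.sqrt_nonneg (Sy y)]
      rw [hz, neg_zero, Set.Ioo_self, Set.inter_empty, Measure.restrict_empty,
        lintegral_zero_measure]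
      exact zero_le
  have hkey2 : ∀ᵐ y : Fin n → ℝ,
      (∫⁻ t : ℝ, (Sm.indicator (fun w => ENNReal.ofReal (q ‖w‖)) (Φ (t, y))))
        ≤ (∫⁻ t : ℝ, (Sp.indicator (fun w => ENNReal.ofReal (q ‖w‖)) (Φ (t, y))))
          + c2 y := by
    filter_upwards [haey] with y hy
    rw [hinnerP y, hinnerM y]
    have hρpos : 0 < Real.sqrt (Sy y) := Real.sqrt_pos.mpr hy
    rcases lt_or_ge (Real.sqrt (Sy y)) (2*σ) with hcase | hcase
    · have hse := (AnnuliAux.slice_est gb hpos hdec hσ hσ4 hρpos hcase).2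
      rw [Real.sq_sqrt (hSy0 y)] at hse
      refine le_trans hse (add_le_add_right ?_ _)
      have hmem : y ∈ {y : Fin n → ℝ | Real.sqrt (Sy y) < 2*σ} := hcase
      rw [hc2def]
      simp only [Set.indicator_of_mem hmem]
      exact le_rfl
    · have hz : Real.sqrt ((2*σ)^2 - Sy y) = 0 := by
        apply Real.sqrt_eq_zero'.mpr
        nlinarith [Real.sq_sqrt (hSy0 y), Real.sqrt_nonneg (Sy y)]
      rw [hz, neg_zero, Set.Ioo_self, Set.inter_empty, Measure.restrict_empty,
        lintegral_zero_measure]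
      exact zero_le
  -- measurability of inner integrals
  have hbfunm : Measurable fun y : Fin n → ℝ =>
      ∫⁻ t : ℝ, (Sm.indicator (fun w => ENNReal.ofReal (q ‖w‖)) (Φ (t, y))) :=
    Measurable.lintegral_prod_left' (((hfm.comp measurable_norm).indicator hSmmeas).comp hΦm)
  have hafunm : Measurable fun y : Fin n → ℝ =>
      ∫⁻ t : ℝ, (Sp.indicator (fun w => ENNReal.ofReal (q ‖w‖)) (Φ (t, y))) :=
    Measurable.lintegral_prod_left' (((hfm.comp measurable_norm).indicator hSpmeas).comp hΦm)
  -- bounds for the error integrals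
  have hc1b : (∫⁻ y, c1 y) ≤ ENNReal.ofReal (4*σ) * Kp := by
    rw [hc1def, lintegral_indicator hsetmeas]
    have hsplit : ∀ y ∈ {y : Fin n → ℝ | Real.sqrt (Sy y) < 2*σ},
        ENNReal.ofReal (4*σ*(Real.sqrt (Sy y) * q (Real.sqrt (Sy y))))
          = ENNReal.ofReal (4*σ) * ENNReal.ofReal (Real.sqrt (Sy y) * q (Real.sqrt (Sy y))) :=
      fun y _ => ENNReal.ofReal_mul (by linarith)
    rw [setLIntegral_congr_fun_ae hsetmeas (ae_of_all _ hsplit)]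
    have hmeas1 : Measurable fun y : Fin n → ℝ =>
        ENNReal.ofReal (Real.sqrt (Sy y) * q (Real.sqrt (Sy y))) :=
      ENNReal.measurable_ofReal.comp (hsqrtm.mul (hqm.comp hsqrtm))
    rw [lintegral_const_mul _ hmeas1]
    apply mul_le_mul_right
    -- transport to Euc n
    have htrans := (EuclideanSpace.volume_preserving_symm_measurableEquiv_toLp
      (Fin n)).setLIntegral_comp_preimage_emb
      (MeasurableEquiv.measurableEmbedding _)
      (fun y => ENNReal.ofReal (Real.sqrt (Sy y) * q (Real.sqrt (Sy y))))
      {y : Fin n → ℝ | Real.sqrt (Sy y) < 2*σ}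
    have hSen : ∀ z : Euc n,
        Real.sqrt (Sy (((MeasurableEquiv.toLp 2 (Fin n → ℝ)).symm) z)) = ‖z‖ := by
      intro z
      have h1 : Sy (((MeasurableEquiv.toLp 2 (Fin n → ℝ)).symm) z) = ‖z‖^2 := by
        rw [AnnuliAux.euc_norm_sq]
        show ∑ j : Fin n, ((((MeasurableEquiv.toLp 2 (Fin n → ℝ)).symm) z) j)^2 = ∑ i, (z i)^2
        refine Finset.sum_congr rfl fun j _ => ?_
        simp [MeasurableEquiv.coe_toLp_symm]
      rw [h1, Real.sqrt_sq (norm_nonneg z)]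
    have hpreim : ((MeasurableEquiv.toLp 2 (Fin n → ℝ)).symm) ⁻¹'
        {y : Fin n → ℝ | Real.sqrt (Sy y) < 2*σ} = ball (0 : Euc n) (2*σ) := by
      ext z
      rw [Set.mem_preimage, Set.mem_setOf_eq, hSen z, mem_ball_zero_iff]
    rw [← htrans, hpreim]
    have heq2 : (∫⁻ z in ball (0 : Euc n) (2*σ),
        (fun y => ENNReal.ofReal (Real.sqrt (Sy y) * q (Real.sqrt (Sy y))))
          (((MeasurableEquiv.toLp 2 (Fin n → ℝ)).symm) z))
        = ∫⁻ z in ball (0 : Euc n) (2*σ), ENNReal.ofReal (‖z‖ * q ‖z‖) := by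
      refine setLIntegral_congr_fun_ae measurableSet_ball (ae_of_all _ fun z _ => ?_)
      simp only [hSen z]
    rw [heq2, hKpdef]
    exact lintegral_mono_set (ball_subset_ball (by linarith))
  have hC2σ : 9*σ^2*gb (σ/2)*(4*σ)^n ≤ σ * C2 := by
    have hker := AnnuliAux.kernel_pow_bound gb hpos hdec (d := n+1) (by omega) hadm'
      (c := σ/2) (by linarith) (by linarith)
    have h1 : gb (σ/2) * σ^(n+1) ≤ 2^(n+1) * (2*(n+1)*M) := by
      have h2 : ((σ:ℝ)/2)^(n+1) = σ^(n+1)/2^(n+1) := div_pow σ 2 (n+1)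
      rw [h2] at hker
      have h3 : (0:ℝ) < 2^(n+1) := by positivity
      calc gb (σ/2) * σ^(n+1) = (gb (σ/2) * (σ^(n+1)/2^(n+1))) * 2^(n+1) := by
            field_simp
        _ ≤ (2*(n+1) * ∫ t in Set.Ioo (0:ℝ) 1, gb t * t ^ n) * 2^(n+1) := by
            apply mul_le_mul_of_nonneg_right _ h3.le
            convert hker using 3
            rfl
            all_goals simp
        _ = 2^(n+1)*(2*(n+1)*M) := by rw [hMdef]; ring
    calc 9*σ^2*gb (σ/2)*(4*σ)^n = 9*4^n*σ*(gb (σ/2)*σ^(n+1)) := by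
          rw [mul_pow]; ring
      _ ≤ 9*4^n*σ*(2^(n+1)*(2*(n+1)*M)) := by
          apply mul_le_mul_of_nonneg_left h1 (by positivity)
      _ = σ * C2 := by rw [hC2def]; ring
  have hc2b : (∫⁻ y, c2 y) ≤ ENNReal.ofReal (σ * C2) := by
    rw [hc2def, lintegral_indicator hsetmeas, setLIntegral_const]
    have hvol : volume {y : Fin n → ℝ | Real.sqrt (Sy y) < 2*σ}
        ≤ ENNReal.ofReal ((4*σ)^n) := by
      have hsub : {y : Fin n → ℝ | Real.sqrt (Sy y) < 2*σ}
          ⊆ Set.pi Set.univ (fun _ : Fin n => Set.Ioo (-(2*σ)) (2*σ)) := by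
        intro y hy j _
        have h1 : (y j)^2 ≤ Sy y :=
          Finset.single_le_sum (f := fun j => (y j)^2) (fun i _ => sq_nonneg _)
            (Finset.mem_univ j)
        have h2 : |y j| < 2*σ := by
          have h3 := Real.sqrt_le_sqrt h1
          rw [Real.sqrt_sq_eq_abs] at h3
          exact lt_of_le_of_lt h3 hy
        exact abs_lt.mp h2
      calc volume {y : Fin n → ℝ | Real.sqrt (Sy y) < 2*σ}
          ≤ volume (Set.pi Set.univ (fun _ : Fin n => Set.Ioo (-(2*σ)) (2*σ))) :=
            measure_mono hsub
        _ = ∏ _j : Fin n, volume (Set.Ioo (-(2*σ)) (2*σ)) := volume_pi_pi _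
        _ = ∏ _j : Fin n, ENNReal.ofReal (4*σ) := by
            refine Finset.prod_congr rfl fun j _ => ?_
            rw [Real.volume_Ioo]
            congr 1
            ring
        _ = (ENNReal.ofReal (4*σ))^n := by
            rw [Finset.prod_const, Finset.card_univ, Fintype.card_fin]
        _ = ENNReal.ofReal ((4*σ)^n) := (ENNReal.ofReal_pow (by linarith) n).symm
    calc ENNReal.ofReal (9*σ^2*gb (σ/2)) * volume {y : Fin n → ℝ | Real.sqrt (Sy y) < 2*σ}
        ≤ ENNReal.ofReal (9*σ^2*gb (σ/2)) * ENNReal.ofReal ((4*σ)^n) :=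
          mul_le_mul_right hvol _
      _ = ENNReal.ofReal (9*σ^2*gb (σ/2) * (4*σ)^n) := by
          rw [← ENNReal.ofReal_mul (mul_nonneg (by positivity) (hpos _ (by linarith)).le)]
      _ ≤ ENNReal.ofReal (σ * C2) := ENNReal.ofReal_le_ofReal hC2σ
  -- main comparison in ℝ≥0∞
  have hofreq : ENNReal.ofReal (4*σ) * Kp + ENNReal.ofReal (σ * C2)
      ≤ ENNReal.ofReal (σ * X) := by
    have h1 : ENNReal.ofReal (4*σ) * Kp = ENNReal.ofReal (4*σ*Kp.toReal) := by
      conv_lhs => rw [← ENNReal.ofReal_toReal hKpfin]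
      rw [← ENNReal.ofReal_mul (by linarith)]
    rw [h1, ← ENNReal.ofReal_add (by positivity) (mul_nonneg hσ.le hC2nn)]
    apply ENNReal.ofReal_le_ofReal
    rw [hXdef]
    nlinarith [hσ.le]
  have hmain1 : A ≤ B + ENNReal.ofReal (σ * X) := by
    calc A = ∫⁻ y : Fin n → ℝ, ∫⁻ t : ℝ,
          (Sp.indicator (fun w => ENNReal.ofReal (q ‖w‖)) (Φ (t, y))) := by
          rw [hAdef]; exact hfub Sp hSpmeas
      _ ≤ ∫⁻ y : Fin n → ℝ, ((∫⁻ t : ℝ,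
            (Sm.indicator (fun w => ENNReal.ofReal (q ‖w‖)) (Φ (t, y)))) + (c1 y + c2 y)) :=
          lintegral_mono_ae hkey1
      _ = (∫⁻ y : Fin n → ℝ, ∫⁻ t : ℝ,
            (Sm.indicator (fun w => ENNReal.ofReal (q ‖w‖)) (Φ (t, y))))
            + ∫⁻ y, (c1 y + c2 y) := lintegral_add_left hbfunm _
      _ = B + ((∫⁻ y, c1 y) + ∫⁻ y, c2 y) := by
          rw [← hfub Sm hSmmeas, ← hBdef, lintegral_add_left hc1m]
      _ ≤ B + (ENNReal.ofReal (4*σ) * Kp + ENNReal.ofReal (σ * C2)) :=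
          add_le_add_right (add_le_add hc1b hc2b) B
      _ ≤ B + ENNReal.ofReal (σ * X) := add_le_add_right hofreq B
  have hmain2 : B ≤ A + ENNReal.ofReal (σ * X) := by
    calc B = ∫⁻ y : Fin n → ℝ, ∫⁻ t : ℝ,
          (Sm.indicator (fun w => ENNReal.ofReal (q ‖w‖)) (Φ (t, y))) := by
          rw [hBdef]; exact hfub Sm hSmmeas
      _ ≤ ∫⁻ y : Fin n → ℝ, ((∫⁻ t : ℝ,
            (Sp.indicator (fun w => ENNReal.ofReal (q ‖w‖)) (Φ (t, y)))) + c2 y) :=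
          lintegral_mono_ae hkey2
      _ = (∫⁻ y : Fin n → ℝ, ∫⁻ t : ℝ,
            (Sp.indicator (fun w => ENNReal.ofReal (q ‖w‖)) (Φ (t, y)))) + ∫⁻ y, c2 y :=
          lintegral_add_left hafunm _
      _ = A + ∫⁻ y, c2 y := by rw [← hfub Sp hSpmeas, ← hAdef]
      _ ≤ A + ENNReal.ofReal (σ * C2) := add_le_add_right hc2b A
      _ ≤ A + ENNReal.ofReal (σ * X) := by
          apply add_le_add_right
          apply ENNReal.ofReal_le_ofReal
          rw [hXdef]
          nlinarith [hσ.le, hKnn]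
  -- back to real integrals
  rw [hbridge Sp hSpmeas Set.inter_subset_right, hbridge Sm hSmmeas Set.inter_subset_right]
  rw [← hAdef, ← hBdef]
  have hofr : (ENNReal.ofReal (σ * X)).toReal = σ * X :=
    ENNReal.toReal_ofReal (mul_nonneg hσ.le hXnn)
  have hcomm : σ * X = X * σ := mul_comm _ _
  rw [abs_sub_le_iff]
  constructor
  · have h1 := ENNReal.toReal_mono
      (ENNReal.add_ne_top.mpr ⟨hBfin, ENNReal.ofReal_ne_top⟩) hmain1
    rw [ENNReal.toReal_add hBfin ENNReal.ofReal_ne_top, hofr] at h1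
    linarith
  · have h1 := ENNReal.toReal_mono
      (ENNReal.add_ne_top.mpr ⟨hAfin, ENNReal.ofReal_ne_top⟩) hmain2
    rw [ENNReal.toReal_add hAfin ENNReal.ofReal_ne_top, hofr] at h1
    linarith
end
end

section
/- Let N ≥ 2, let 0 < σ ≤ 1/4 and 2σ < t < 1/4, and define θ = arccos(−t/2), θ⁺ = arccos((−t² + 2σ + σ²)/(2t)), θ⁻ = arccos((−t² − 2σ + σ²)/(2t)). Then K := |∫_{θ⁺}^{θ} [(sin α)^{N−2} − (sin θ)^{N−2}] dα − ∫_{θ}^{θ⁻} [(sin α)^{N−2} − (sin θ)^{N−2}] dα| ≤ 9 (N−2) σ. -/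
open Real Set intervalIntegral MeasureTheory

set_option maxHeartbeats 1000000

/-- auxiliary function: the substituted integrand -/
noncomputable def hhaux (k : ℕ) (S u : ℝ) : ℝ :=
  (Real.sqrt (1 - u ^ 2)) ^ (k - 1) - S ^ k / Real.sqrt (1 - u ^ 2)

/-- auxiliary function: its derivative -/
noncomputable def HHaux (k : ℕ) (S u : ℝ) : ℝ :=
  ((k - 1 : ℕ) : ℝ) * (Real.sqrt (1 - u ^ 2)) ^ (k - 1 - 1) * (-u / Real.sqrt (1 - u ^ 2))
    - S ^ k * (-(-u / Real.sqrt (1 - u ^ 2)) / (Real.sqrt (1 - u ^ 2)) ^ 2)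

lemma sqrt_lb {u : ℝ} (hu : |u| ≤ 11 / 16) : (7 : ℝ) / 10 ≤ Real.sqrt (1 - u ^ 2) := by
  have h1 : ((7 : ℝ) / 10) ^ 2 ≤ 1 - u ^ 2 := by
    have := sq_abs u
    nlinarith [abs_nonneg u]
  calc (7 : ℝ) / 10 = Real.sqrt (((7 : ℝ) / 10) ^ 2) := by
        rw [Real.sqrt_sq (by norm_num)]
      _ ≤ _ := Real.sqrt_le_sqrt h1

lemma sqrt_ub (u : ℝ) : Real.sqrt (1 - u ^ 2) ≤ 1 :=
  Real.sqrt_le_one.mpr (by nlinarith [sq_nonneg u])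

lemma hasDerivAt_hhaux (k : ℕ) (S : ℝ) {u : ℝ} (hu : u ^ 2 < 1) :
    HasDerivAt (hhaux k S) (HHaux k S u) u := by
  have hpos : 0 < 1 - u ^ 2 := by linarith
  have hr0 : Real.sqrt (1 - u ^ 2) ≠ 0 := by positivity
  have h1 : HasDerivAt (fun u : ℝ => 1 - u ^ 2) (-(2 * u)) u := by
    simpa using ((hasDerivAt_pow 2 u).const_sub 1)
  have hr : HasDerivAt (fun u : ℝ => Real.sqrt (1 - u ^ 2)) (-u / Real.sqrt (1 - u ^ 2)) u := by
    have h2 := (Real.hasDerivAt_sqrt (ne_of_gt hpos)).comp u h1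
    refine h2.congr_deriv ?_
    field_simp
  have h2 := (hr.pow (k - 1)).sub ((hr.inv hr0).const_mul (S ^ k))
  have hfun : hhaux k S = fun u => (Real.sqrt (1 - u ^ 2)) ^ (k - 1) - S ^ k * (Real.sqrt (1 - u ^ 2))⁻¹ := by
    funext v
    simp [hhaux, div_eq_mul_inv]
  rw [hfun]
  exact h2

lemma HHaux_bound (k : ℕ) {S u : ℝ} (hS1 : 0 ≤ S) (hS2 : S ≤ 1) (hu : |u| ≤ 11 / 16) :
    |HHaux k S u| ≤ (2 * k + 4) * |u| := by
  set r := Real.sqrt (1 - u ^ 2) with hr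
  have hr1 : (7 : ℝ) / 10 ≤ r := sqrt_lb hu
  have hr2 : r ≤ 1 := sqrt_ub u
  have hr0 : 0 < r := by linarith
  have hinv : r⁻¹ ≤ 10 / 7 := by
    rw [inv_le_comm₀ hr0 (by norm_num)]
    linarith
  have hb1 : |((k - 1 : ℕ) : ℝ) * r ^ (k - 1 - 1) * (-u / r)| ≤ 2 * k * |u| := by
    rw [abs_mul, abs_mul, abs_div, abs_neg, abs_of_pos hr0]
    have e1 : |((k - 1 : ℕ) : ℝ)| ≤ (k : ℝ) := by
      rw [abs_of_nonneg (by positivity)]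
      exact_mod_cast Nat.sub_le k 1
    have e2 : |r ^ (k - 1 - 1)| ≤ 1 := by
      rw [abs_of_nonneg (by positivity)]
      exact pow_le_one₀ hr0.le hr2
    have e3 : |u| / r ≤ 10 / 7 * |u| := by
      rw [div_eq_inv_mul]
      exact mul_le_mul_of_nonneg_right hinv (abs_nonneg u)
    calc |((k - 1 : ℕ) : ℝ)| * |r ^ (k - 1 - 1)| * (|u| / r)
        ≤ (k : ℝ) * 1 * (10 / 7 * |u|) := by
          apply mul_le_mul (mul_le_mul e1 e2 (abs_nonneg _) (Nat.cast_nonneg k)) e3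
            (by positivity) (by positivity)
      _ ≤ 2 * k * |u| := by nlinarith [abs_nonneg u, Nat.cast_nonneg (α := ℝ) k]
  have hb2 : |S ^ k * (-(-u / r) / r ^ 2)| ≤ 4 * |u| := by
    rw [abs_mul, abs_div, abs_neg, abs_div, abs_neg, abs_of_pos hr0, abs_of_pos (pow_pos hr0 2)]
    have e1 : |S ^ k| ≤ 1 := by
      rw [abs_of_nonneg (by positivity)]
      exact pow_le_one₀ hS1 hS2
    have e2 : |u| / r / r ^ 2 ≤ (10 / 7) ^ 3 * |u| := by
      have h3 : (0:ℝ) < r ^ 2 := pow_pos hr0 2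
      rw [div_div, ← pow_succ']
      rw [div_le_iff₀ (by positivity)]
      have : ((7:ℝ)/10) ^ 3 ≤ r ^ 3 := by
        apply pow_le_pow_left₀ (by norm_num) hr1
      nlinarith [abs_nonneg u]
    calc |S ^ k| * (|u| / r / r ^ 2) ≤ 1 * ((10 / 7) ^ 3 * |u|) := by
          apply mul_le_mul e1 e2 (by positivity) (by norm_num)
      _ ≤ 4 * |u| := by nlinarith [abs_nonneg u]
  calc |HHaux k S u| ≤ |((k - 1 : ℕ) : ℝ) * r ^ (k - 1 - 1) * (-u / r)|
        + |S ^ k * (-(-u / r) / r ^ 2)| := abs_sub _ _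
    _ ≤ 2 * k * |u| + 4 * |u| := add_le_add hb1 hb2
    _ = (2 * k + 4) * |u| := by ring

lemma hhaux_contOn (k : ℕ) (S : ℝ) :
    ContinuousOn (hhaux k S) (Icc (-(11 / 16) : ℝ) (11 / 16)) := by
  apply ContinuousOn.sub
  · exact (((continuous_const.sub (continuous_pow 2)).sqrt).pow _).continuousOn
  · apply ContinuousOn.div continuousOn_const
      ((continuous_const.sub (continuous_pow 2)).sqrt).continuousOn
    intro x hx
    have hx' : |x| ≤ 11 / 16 := abs_le.mpr ⟨hx.1, hx.2⟩
    have := sqrt_lb hx'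
    positivity

lemma pow_lip (k : ℕ) {a b : ℝ} (ha : a ∈ Icc (0 : ℝ) 1) (hb : b ∈ Icc (0 : ℝ) 1) :
    |a ^ k - b ^ k| ≤ k * |a - b| := by
  have key := Convex.norm_image_sub_le_of_norm_deriv_le (𝕜 := ℝ) (f := fun x : ℝ => x ^ k)
    (s := Icc (0 : ℝ) 1) (C := (k : ℝ))
    (fun x _ => differentiableAt_pow k)
    (fun x hx => by
      rw [deriv_pow_field, Real.norm_eq_abs, abs_mul, abs_of_nonneg (Nat.cast_nonneg k)]
      have : |x ^ (k - 1)| ≤ 1 := by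
        rw [abs_of_nonneg (pow_nonneg hx.1 _)]
        exact pow_le_one₀ hx.1 hx.2
      nlinarith [Nat.cast_nonneg (α := ℝ) k])
    (convex_Icc _ _) hb ha
  simpa [Real.norm_eq_abs] using key

lemma hhaux_abs_le (k : ℕ) (hk : 1 ≤ k) {S u : ℝ} (hS1 : 7 / 10 ≤ S) (hS2 : S ≤ 1)
    (hu : |u| ≤ 11 / 16) :
    |hhaux k S u| ≤ 3 / 2 * k * |u ^ 2 - (1 - S ^ 2)| := by
  set r := Real.sqrt (1 - u ^ 2) with hr
  have hr1 : (7 : ℝ) / 10 ≤ r := sqrt_lb hu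
  have hr2 : r ≤ 1 := sqrt_ub u
  have hr0 : 0 < r := by linarith
  have hrsq : r ^ 2 = 1 - u ^ 2 := Real.sq_sqrt (by nlinarith [sq_abs u, abs_nonneg u])
  have hpow : r ^ (k - 1) = r ^ k / r := by
    rw [eq_div_iff hr0.ne', ← pow_succ]
    congr 1
    omega
  have heq : hhaux k S u = (r ^ k - S ^ k) / r := by
    rw [hhaux, ← hr, hpow]
    ring
  have h1 : |r ^ k - S ^ k| ≤ k * |r - S| :=
    pow_lip k ⟨hr0.le, hr2⟩ ⟨by linarith, hS2⟩
  have h2 : |r - S| ≤ 5 / 7 * |r ^ 2 - S ^ 2| := by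
    have hrs : 0 < r + S := by linarith
    have e : r - S = (r ^ 2 - S ^ 2) / (r + S) := by
      field_simp
      ring
    rw [e, abs_div, abs_of_pos hrs, div_le_iff₀ hrs]
    nlinarith [abs_nonneg (r ^ 2 - S ^ 2)]
  have h3 : |r ^ 2 - S ^ 2| = |u ^ 2 - (1 - S ^ 2)| := by
    rw [hrsq, show 1 - u ^ 2 - S ^ 2 = -(u ^ 2 - (1 - S ^ 2)) by ring, abs_neg]
  rw [heq, abs_div, abs_of_pos hr0, div_le_iff₀ hr0]
  calc |r ^ k - S ^ k| ≤ k * (5 / 7 * |u ^ 2 - (1 - S ^ 2)|) := by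
        rw [← h3]
        exact h1.trans (mul_le_mul_of_nonneg_left h2 (Nat.cast_nonneg k))
    _ ≤ 3 / 2 * k * |u ^ 2 - (1 - S ^ 2)| * r := by
        nlinarith [abs_nonneg (u ^ 2 - (1 - S ^ 2)), Nat.cast_nonneg (α := ℝ) k,
          mul_nonneg (Nat.cast_nonneg (α := ℝ) k) (abs_nonneg (u ^ 2 - (1 - S ^ 2)))]

lemma hhaux_sym (k : ℕ) {S d w : ℝ} (hS1 : 0 ≤ S) (hS2 : S ≤ 1) (hd : 0 ≤ d) (hw : 0 ≤ w)
    (hwd : w + d ≤ 11 / 16) :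
    |hhaux k S (w - d) - hhaux k S (w + d)| ≤ ((2 * k + 4) * (w + d)) * (2 * d) := by
  have hmem : ∀ u ∈ Icc (w - d) (w + d), |u| ≤ w + d := by
    intro u hu
    rw [abs_le]
    constructor <;> [linarith [hu.1]; linarith [hu.2]]
  have key := Convex.norm_image_sub_le_of_norm_hasDerivWithin_le
    (f := hhaux k S) (f' := HHaux k S) (s := Icc (w - d) (w + d)) (C := (2 * k + 4) * (w + d))
    (fun u hu => by
      have h1 : |u| ≤ 11 / 16 := (hmem u hu).trans hwd
      have h2 : u ^ 2 < 1 := by nlinarith [sq_abs u, abs_nonneg u]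
      exact (hasDerivAt_hhaux k S h2).hasDerivWithinAt)
    (fun u hu => by
      rw [Real.norm_eq_abs]
      calc |HHaux k S u| ≤ (2 * k + 4) * |u| :=
            HHaux_bound k hS1 hS2 ((hmem u hu).trans hwd)
        _ ≤ (2 * k + 4) * (w + d) := by
            apply mul_le_mul_of_nonneg_left (hmem u hu) (by positivity))
    (convex_Icc _ _)
    (show w + d ∈ Icc (w - d) (w + d) by constructor <;> linarith)
    (show w - d ∈ Icc (w - d) (w + d) by constructor <;> linarith)
  rw [Real.norm_eq_abs, Real.norm_eq_abs] at key
  calc |hhaux k S (w - d) - hhaux k S (w + d)| ≤ (2 * k + 4) * (w + d) * |w - d - (w + d)| := key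
    _ = ((2 * k + 4) * (w + d)) * (2 * d) := by
        rw [show w - d - (w + d) = -(2 * d) by ring, abs_neg, abs_of_nonneg (by linarith)]

lemma subst_lemma (k : ℕ) (hk : 1 ≤ k) (S : ℝ) {q c : ℝ}
    (hq : |q| ≤ 11 / 16) (hc : |c| ≤ 11 / 16) :
    (∫ x in arccos q..arccos c, (sin x ^ k - S ^ k)) = ∫ u in c..q, hhaux k S u := by
  obtain ⟨hq1, hq2⟩ := abs_le.mp hq
  obtain ⟨hc1, hc2⟩ := abs_le.mp hc
  have hq1' : -1 < q := by linarith
  have hq2' : q < 1 := by linarith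
  have hc1' : -1 < c := by linarith
  have hc2' : c < 1 := by linarith
  set A := arccos q with hA
  set B := arccos c with hB
  have hA0 : 0 < A := arccos_pos.mpr hq2'
  have hB0 : 0 < B := arccos_pos.mpr hc2'
  have hAπ : A < π := (arccos_le_pi q).lt_of_ne fun h => (not_le.mpr hq1') (arccos_eq_pi.mp h)
  have hBπ : B < π := (arccos_le_pi c).lt_of_ne fun h => (not_le.mpr hc1') (arccos_eq_pi.mp h)
  have hsub : uIcc A B ⊆ Ioo 0 π := by
    intro x hx
    rcases Set.mem_uIcc.mp hx with ⟨h1, h2⟩ | ⟨h1, h2⟩ <;> exact ⟨by linarith, by linarith⟩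
  have himg : Real.cos '' (uIcc A B) ⊆ Icc (-(11 / 16) : ℝ) (11 / 16) := by
    rintro _ ⟨x, hx, rfl⟩
    have hcB : Real.cos B = c := Real.cos_arccos hc1'.le hc2'.le
    have hcA : Real.cos A = q := Real.cos_arccos hq1'.le hq2'.le
    obtain ⟨hx0, hxπ⟩ := hsub hx
    rcases Set.mem_uIcc.mp hx with ⟨h1, h2⟩ | ⟨h1, h2⟩
    · constructor
      · have h3 : Real.cos B ≤ Real.cos x :=
          Real.cos_le_cos_of_nonneg_of_le_pi hx0.le hBπ.le h2
        linarith [hcB ▸ h3]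
      · have h3 : Real.cos x ≤ Real.cos A :=
          Real.cos_le_cos_of_nonneg_of_le_pi hA0.le hxπ.le h1
        linarith [hcA ▸ h3]
    · constructor
      · have h3 : Real.cos A ≤ Real.cos x :=
          Real.cos_le_cos_of_nonneg_of_le_pi hx0.le hAπ.le h2
        linarith [hcA ▸ h3]
      · have h3 : Real.cos x ≤ Real.cos B :=
          Real.cos_le_cos_of_nonneg_of_le_pi hB0.le hxπ.le h1
        linarith [hcB ▸ h3]
  have key := intervalIntegral.integral_comp_smul_deriv' (a := A) (b := B)
    (f := Real.cos) (f' := fun x => -Real.sin x) (g := hhaux k S)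
    (fun x _ => Real.hasDerivAt_cos x)
    (Real.continuous_sin.neg).continuousOn
    ((hhaux_contOn k S).mono himg)
  rw [Real.cos_arccos hq1'.le hq2'.le, Real.cos_arccos hc1'.le hc2'.le] at key
  have hcongr : ∀ x ∈ uIcc A B,
      (fun x => (-Real.sin x) • ((hhaux k S) ∘ Real.cos) x) x
        = (fun x => -(Real.sin x ^ k - S ^ k)) x := by
    intro x hx
    obtain ⟨hx0, hxπ⟩ := hsub hx
    have hsin : 0 < Real.sin x := Real.sin_pos_of_pos_of_lt_pi hx0 hxπ
    have h1 : Real.sqrt (1 - Real.cos x ^ 2) = Real.sin x := by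
      rw [show 1 - Real.cos x ^ 2 = Real.sin x ^ 2 by
        nlinarith [Real.sin_sq_add_cos_sq x], Real.sqrt_sq hsin.le]
    have hpow : Real.sin x ^ (k - 1) * Real.sin x = Real.sin x ^ k := by
      rw [← pow_succ]
      congr 1
      omega
    simp only [Function.comp, hhaux, smul_eq_mul, h1]
    calc -Real.sin x * (Real.sin x ^ (k - 1) - S ^ k / Real.sin x)
        = -(Real.sin x ^ (k - 1) * Real.sin x) + (S ^ k / Real.sin x) * Real.sin x := by ring
      _ = -(Real.sin x ^ k) + S ^ k := by rw [hpow, div_mul_cancel₀ _ hsin.ne']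
      _ = -(Real.sin x ^ k - S ^ k) := by ring
  rw [intervalIntegral.integral_congr hcongr, intervalIntegral.integral_neg] at key
  rw [intervalIntegral.integral_symm q c]
  linarith [key]

/-- Let `N ≥ 2`, `0 < σ ≤ 1/4`, `2σ < t < 1/4`, and let `θ = arccos(−t/2)`,
`θ⁺ = arccos((−t² + 2σ + σ²)/(2t))`, `θ⁻ = arccos((−t² − 2σ + σ²)/(2t))`.  Then
`K = |∫_{θ⁺}^{θ} [(sin α)^{N−2} − (sin θ)^{N−2}] dα − ∫_{θ}^{θ⁻} [(sin α)^{N−2} − (sin θ)^{N−2}] dα|`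
satisfies `K ≤ 9 (N−2) σ`. -/
theorem sine_integral_estimate {N : ℕ} (hN : 2 ≤ N) (σ t : ℝ) (hσ0 : 0 < σ)
    (hσ : σ ≤ 1 / 4) (ht0 : 2 * σ < t) (ht : t < 1 / 4) :
    |(∫ α in arccos ((-t ^ 2 + 2 * σ + σ ^ 2) / (2 * t))..arccos (-t / 2),
        ((sin α) ^ (N - 2) - (sin (arccos (-t / 2))) ^ (N - 2))) -
      (∫ α in arccos (-t / 2)..arccos ((-t ^ 2 - 2 * σ + σ ^ 2) / (2 * t)),
        ((sin α) ^ (N - 2) - (sin (arccos (-t / 2))) ^ (N - 2)))|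
      ≤ 9 * ((N : ℝ) - 2) * σ := by
  rcases Nat.lt_or_ge N 3 with hN2 | hN3
  · have hN2' : N = 2 := by omega
    subst hN2'
    norm_num
  · set k := N - 2 with hkdef
    have hk1 : 1 ≤ k := by omega
    have hkR : (1 : ℝ) ≤ (k : ℝ) := by exact_mod_cast hk1
    have hcast : ((N : ℝ) - 2) = (k : ℝ) := by
      rw [hkdef, Nat.cast_sub (by omega : 2 ≤ N)]
      norm_num
    rw [hcast]
    set S := sin (arccos (-t / 2)) with hSdef
    have ht' : 0 < t := by linarith
    have hσ8 : σ < 1 / 8 := by linarith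
    have hSval : S = Real.sqrt (1 - (t / 2) ^ 2) := by
      rw [hSdef, Real.sin_arccos]
      congr 1
      ring
    have hS1 : 7 / 10 ≤ S := by
      rw [hSval]
      calc (7 : ℝ) / 10 = Real.sqrt (((7 : ℝ) / 10) ^ 2) := by
            rw [Real.sqrt_sq (by norm_num)]
        _ ≤ _ := Real.sqrt_le_sqrt (by nlinarith only [ht', ht])
    have hS2 : S ≤ 1 := by
      rw [hSval]
      exact Real.sqrt_le_one.mpr (by nlinarith only [sq_nonneg (t / 2)])
    have hSsq : S ^ 2 = 1 - (t / 2) ^ 2 := by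
      rw [hSval]
      exact Real.sq_sqrt (by nlinarith only [ht', ht])
    set δp := (2 * σ + σ ^ 2) / (2 * t) with hdp
    set δm := (2 * σ - σ ^ 2) / (2 * t) with hdm
    have h2t : (0 : ℝ) < 2 * t := by linarith
    have dm0 : 0 ≤ δm := div_nonneg (by nlinarith only [hσ0, hσ]) h2t.le
    have dp0 : 0 ≤ δp := div_nonneg (by nlinarith only [hσ0.le, sq_nonneg σ]) h2t.le
    have dmhalf : δm ≤ 1 / 2 := by
      rw [hdm, div_le_iff₀ h2t]
      nlinarith only [ht0, sq_nonneg σ]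
    have dp916 : δp ≤ 9 / 16 := by
      rw [hdp, div_le_iff₀ h2t]
      nlinarith only [hσ0, hσ, ht0]
    have hdiff : δp - δm = σ ^ 2 / t := by
      rw [hdm, hdp]
      field_simp
      ring
    have dmp : δm ≤ δp := by
      have h0 := div_nonneg (sq_nonneg σ) ht'.le
      linarith only [hdiff, h0]
    have h_t_dm : t * δm ≤ σ := by
      have e : t * δm = (2 * σ - σ ^ 2) / 2 := by
        rw [hdm]
        field_simp
      rw [e]
      linarith only [sq_nonneg σ, hσ0]
    have h_dpdm : δp * (δp - δm) ≤ 9 / 32 * σ := by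
      have e : δp * (δp - δm) = (σ ^ 2 * (σ + σ ^ 2 / 2)) / t ^ 2 := by
        rw [hdp, hdm]
        field_simp
        ring
      rw [e, div_le_iff₀ (by positivity)]
      have h4 : 4 * σ ^ 2 ≤ t ^ 2 := by
        nlinarith only [mul_self_le_mul_self (by linarith only [hσ0] : (0:ℝ) ≤ 2 * σ) ht0.le]
      have h5 : σ ^ 4 ≤ σ ^ 3 / 4 := by
        nlinarith only [pow_nonneg hσ0.le 3, hσ]
      linarith only [h5, mul_le_mul_of_nonneg_left h4 hσ0.le]
    have h_dmp' : 0 ≤ δp - δm := by linarith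
    have hpc : (-t ^ 2 + 2 * σ + σ ^ 2) / (2 * t) = -t / 2 + δp := by
      rw [hdp]
      field_simp
      ring
    have hmc : (-t ^ 2 - 2 * σ + σ ^ 2) / (2 * t) = -t / 2 - δm := by
      rw [hdm]
      field_simp
      ring
    have habs_c : |(-t / 2 : ℝ)| ≤ 11 / 16 := abs_le.mpr ⟨by linarith, by linarith⟩
    have habs_p : |(-t / 2 + δp : ℝ)| ≤ 11 / 16 := abs_le.mpr ⟨by linarith, by linarith⟩
    have habs_m : |(-t / 2 - δm : ℝ)| ≤ 11 / 16 := abs_le.mpr ⟨by linarith, by linarith⟩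
    have E1 := subst_lemma k hk1 S habs_p habs_c
    have E2 := subst_lemma k hk1 S habs_c habs_m
    rw [hpc, hmc, E1, E2]
    have heven : (fun u => hhaux k S (-u)) = hhaux k S := by
      funext v
      simp [hhaux, neg_sq]
    have REF : (∫ u in (-t / 2 - δm)..(-t / 2), hhaux k S u)
        = ∫ u in (t / 2)..(t / 2 + δm), hhaux k S u := by
      have h := intervalIntegral.integral_comp_neg (a := t / 2) (b := t / 2 + δm) (f := hhaux k S)
      rw [heven] at h
      rw [show -(t / 2 + δm) = -t / 2 - δm by ring, show -(t / 2) = -t / 2 by ring] at h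
      exact h.symm
    have T1 : (∫ u in (-t / 2)..(-t / 2 + δp), hhaux k S u)
        = ∫ w in (0 : ℝ)..δp, hhaux k S (w - t / 2) := by
      have h := intervalIntegral.integral_comp_sub_right (a := (0 : ℝ)) (b := δp)
        (f := hhaux k S) (t / 2)
      rw [show (0 : ℝ) - t / 2 = -t / 2 by ring, show δp - t / 2 = -t / 2 + δp by ring] at h
      exact h.symm
    have T2 : (∫ u in (t / 2)..(t / 2 + δm), hhaux k S u)
        = ∫ w in (0 : ℝ)..δm, hhaux k S (w + t / 2) := by
      have h := intervalIntegral.integral_comp_add_right (a := (0 : ℝ)) (b := δm)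
        (f := hhaux k S) (t / 2)
      rw [show (0 : ℝ) + t / 2 = t / 2 by ring, show δm + t / 2 = t / 2 + δm by ring] at h
      exact h.symm
    rw [REF, T1, T2]
    have contF : ContinuousOn (fun w => hhaux k S (w - t / 2)) (Icc (0 : ℝ) δp) := by
      apply (hhaux_contOn k S).comp (Continuous.continuousOn (continuous_id.sub continuous_const))
      intro w hw
      obtain ⟨hw1, hw2⟩ := Set.mem_Icc.mp hw
      exact Set.mem_Icc.mpr ⟨by show -(11 / 16 : ℝ) ≤ w - t / 2; linarith,
        by show w - t / 2 ≤ 11 / 16; linarith⟩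
    have contG : ContinuousOn (fun w => hhaux k S (w + t / 2)) (Icc (0 : ℝ) δm) := by
      apply (hhaux_contOn k S).comp (Continuous.continuousOn (continuous_id.add continuous_const))
      intro w hw
      obtain ⟨hw1, hw2⟩ := Set.mem_Icc.mp hw
      exact Set.mem_Icc.mpr ⟨by show -(11 / 16 : ℝ) ≤ w + t / 2; linarith,
        by show w + t / 2 ≤ 11 / 16; linarith⟩
    have intF1 : IntervalIntegrable (fun w => hhaux k S (w - t / 2)) volume 0 δm := by
      apply ContinuousOn.intervalIntegrable
      apply contF.mono
      rw [uIcc_of_le dm0]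
      exact Icc_subset_Icc le_rfl dmp
    have intF2 : IntervalIntegrable (fun w => hhaux k S (w - t / 2)) volume δm δp := by
      apply ContinuousOn.intervalIntegrable
      apply contF.mono
      rw [uIcc_of_le dmp]
      exact Icc_subset_Icc dm0 le_rfl
    have intG : IntervalIntegrable (fun w => hhaux k S (w + t / 2)) volume 0 δm := by
      apply ContinuousOn.intervalIntegrable
      apply contG.mono
      rw [uIcc_of_le dm0]
    have split : (∫ w in (0 : ℝ)..δp, hhaux k S (w - t / 2))
        = (∫ w in (0 : ℝ)..δm, hhaux k S (w - t / 2))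
          + ∫ w in δm..δp, hhaux k S (w - t / 2) :=
      (intervalIntegral.integral_add_adjacent_intervals intF1 intF2).symm
    have sub_eq : (∫ w in (0 : ℝ)..δm, hhaux k S (w - t / 2))
          - (∫ w in (0 : ℝ)..δm, hhaux k S (w + t / 2))
        = ∫ w in (0 : ℝ)..δm, (hhaux k S (w - t / 2) - hhaux k S (w + t / 2)) :=
      (intervalIntegral.integral_sub intF1 intG).symm
    have decomp : (∫ w in (0 : ℝ)..δp, hhaux k S (w - t / 2))
          - (∫ w in (0 : ℝ)..δm, hhaux k S (w + t / 2))
        = (∫ w in (0 : ℝ)..δm, (hhaux k S (w - t / 2) - hhaux k S (w + t / 2)))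
          + ∫ w in δm..δp, hhaux k S (w - t / 2) := by
      rw [split, ← sub_eq]
      ring
    rw [decomp]
    have B1 : |∫ w in (0 : ℝ)..δm, (hhaux k S (w - t / 2) - hhaux k S (w + t / 2))|
        ≤ ((2 * k + 4) * t) * (δm ^ 2 / 2 + t / 2 * δm) := by
      have hb : ∀ w ∈ Icc (0 : ℝ) δm,
          |hhaux k S (w - t / 2) - hhaux k S (w + t / 2)|
            ≤ ((2 * k + 4) * t) * (w + t / 2) := by
        intro w hw
        obtain ⟨hw1, hw2⟩ := Set.mem_Icc.mp hw
        have h := hhaux_sym k (S := S) (d := t / 2) (w := w) (by linarith) hS2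
          (by linarith) hw1 (by linarith)
        refine h.trans (le_of_eq (by ring))
      calc |∫ w in (0 : ℝ)..δm, (hhaux k S (w - t / 2) - hhaux k S (w + t / 2))|
          ≤ ∫ w in (0 : ℝ)..δm, |hhaux k S (w - t / 2) - hhaux k S (w + t / 2)| :=
            intervalIntegral.abs_integral_le_integral_abs dm0
        _ ≤ ∫ w in (0 : ℝ)..δm, ((2 * k + 4) * t) * (w + t / 2) := by
            apply intervalIntegral.integral_mono_on dm0 ((intF1.sub intG).abs)
              ((continuous_const.mul (continuous_id.add continuous_const)).intervalIntegrable 0 δm) hb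
        _ = ((2 * k + 4) * t) * (δm ^ 2 / 2 + t / 2 * δm) := by
            rw [intervalIntegral.integral_const_mul]
            have e : (∫ w in (0 : ℝ)..δm, (w + t / 2)) = δm ^ 2 / 2 + t / 2 * δm := by
              rw [intervalIntegral.integral_add intervalIntegral.intervalIntegrable_id
                intervalIntegrable_const, integral_id, intervalIntegral.integral_const]
              simp
              ring
            rw [e]
    have B2 : |∫ w in δm..δp, hhaux k S (w - t / 2)|
        ≤ (3 / 2 * k * (δp * (δp + t))) * |δp - δm| := by
      have key := intervalIntegral.norm_integral_le_of_norm_le_const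
        (C := 3 / 2 * k * (δp * (δp + t))) (f := fun w => hhaux k S (w - t / 2))
        (a := δm) (b := δp) ?_
      · simpa [Real.norm_eq_abs] using key
      · intro w hw
        have hw' : w ∈ Ioc δm δp := by rwa [uIoc_of_le dmp] at hw
        have habs : |w - t / 2| ≤ 11 / 16 :=
          abs_le.mpr ⟨by linarith [hw'.1, dm0], by linarith [hw'.2]⟩
        have h := hhaux_abs_le k hk1 hS1 hS2 habs
        rw [Real.norm_eq_abs]
        refine h.trans ?_
        have h1S : 1 - S ^ 2 = (t / 2) ^ 2 := by
          rw [hSsq]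
          ring
        rw [h1S]
        have e : |(w - t / 2) ^ 2 - (t / 2) ^ 2| = |w| * |w - t| := by
          rw [← abs_mul]
          congr 1
          ring
        rw [e]
        have hw0 : 0 ≤ w := le_trans dm0 hw'.1.le
        have e1 : |w| ≤ δp := abs_le.mpr ⟨by linarith, hw'.2⟩
        have e2 : |w - t| ≤ δp + t := abs_le.mpr ⟨by linarith, by linarith [hw'.2]⟩
        have e3 : |w| * |w - t| ≤ δp * (δp + t) :=
          mul_le_mul e1 e2 (abs_nonneg _) dp0
        have hk0 : (0 : ℝ) ≤ 3 / 2 * k := by positivity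
        calc 3 / 2 * (k : ℝ) * (|w| * |w - t|) ≤ 3 / 2 * (k : ℝ) * (δp * (δp + t)) :=
              mul_le_mul_of_nonneg_left e3 hk0
          _ = 3 / 2 * k * (δp * (δp + t)) := by ring
    have c1 : ((2 * (k : ℝ) + 4) * t) * (δm ^ 2 / 2 + t / 2 * δm)
        ≤ (2 * (k : ℝ) + 4) * (3 / 8 * σ) := by
      have p1 : t * δm * δm ≤ σ * δm := mul_le_mul_of_nonneg_right h_t_dm dm0
      have p2 : σ * δm ≤ σ * (1 / 2) := mul_le_mul_of_nonneg_left dmhalf hσ0.le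
      have p3 : t * (t * δm) ≤ t * σ := mul_le_mul_of_nonneg_left h_t_dm ht'.le
      have p4 : t * σ ≤ 1 / 4 * σ := mul_le_mul_of_nonneg_right ht.le hσ0.le
      have hin : t * (δm ^ 2 / 2 + t / 2 * δm) ≤ 3 / 8 * σ := by
        linarith only [p1, p2, p3, p4]
      calc ((2 * (k : ℝ) + 4) * t) * (δm ^ 2 / 2 + t / 2 * δm)
          = (2 * (k : ℝ) + 4) * (t * (δm ^ 2 / 2 + t / 2 * δm)) := by ring
        _ ≤ _ := mul_le_mul_of_nonneg_left hin (by positivity)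
    have c2 : (3 / 2 * (k : ℝ) * (δp * (δp + t))) * |δp - δm|
        ≤ 3 / 2 * (k : ℝ) * (9 / 32 * σ) := by
      rw [abs_of_nonneg h_dmp']
      have hx : 0 ≤ δp * (δp - δm) := mul_nonneg dp0 h_dmp'
      have hy : δp + t ≤ 1 := by linarith
      have h1 : δp * (δp + t) * (δp - δm) ≤ 9 / 32 * σ := by
        linarith only [mul_le_mul_of_nonneg_right hy hx, h_dpdm, hx]
      calc (3 / 2 * (k : ℝ) * (δp * (δp + t))) * (δp - δm)
          = 3 / 2 * (k : ℝ) * (δp * (δp + t) * (δp - δm)) := by ring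
        _ ≤ _ := mul_le_mul_of_nonneg_left h1 (by positivity)
    calc |(∫ w in (0 : ℝ)..δm, (hhaux k S (w - t / 2) - hhaux k S (w + t / 2)))
          + ∫ w in δm..δp, hhaux k S (w - t / 2)|
        ≤ |∫ w in (0 : ℝ)..δm, (hhaux k S (w - t / 2) - hhaux k S (w + t / 2))|
          + |∫ w in δm..δp, hhaux k S (w - t / 2)| := abs_add_le _ _
      _ ≤ ((2 * k + 4) * t) * (δm ^ 2 / 2 + t / 2 * δm)
          + (3 / 2 * k * (δp * (δp + t))) * |δp - δm| := add_le_add B1 B2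
      _ ≤ (2 * (k : ℝ) + 4) * (3 / 8 * σ) + 3 / 2 * (k : ℝ) * (9 / 32 * σ) := add_le_add c1 c2
      _ ≤ 9 * (k : ℝ) * σ := by
        linarith only [mul_le_mul_of_nonneg_right hkR hσ0.le,
          mul_nonneg (le_trans zero_le_one hkR) hσ0.le, hσ0.le]
end
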